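/- arXiv:2508.14651 — 11 statements merged into one kernel-verified Lean document; each statement's English description precedes it below -/
import Mathlib

section
/- Let I be an ideal of C(X). The u^I-topology and the m^I-topology on C(X) coincide if and only if X is I-pseudocompact. -/
open Set Topology TopologicalSpace Pointwise

/-- `⋂ Z[I] = ⋂_{g ∈ I} Z(g)`, the intersection of the zero sets of members of `I`. -/
def zInter {X : Type*} [TopologicalSpace X] (I : Ideal C(X, ℝ)) : Set X :=
  {x | ∀ g ∈ I, g x = 0}

/-- `B_u(f, I, ε) = {g ∈ C(X) : sup_{x ∈ X} |f x - g x| < ε and f - g ∈ I}`. -/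
def uBall {X : Type*} [TopologicalSpace X] (I : Ideal C(X, ℝ)) (f : C(X, ℝ)) (ε : ℝ) :
    Set C(X, ℝ) :=
  {g | (∃ M, M < ε ∧ ∀ x, |f x - g x| ≤ M) ∧ f - g ∈ I}

/-- The `u^I`-topology on `C(X)`, with open base `{B_u(f, I, ε) : f ∈ C(X), ε > 0}`. -/
def uTopology {X : Type*} [TopologicalSpace X] (I : Ideal C(X, ℝ)) :
    TopologicalSpace C(X, ℝ) :=
  TopologicalSpace.generateFrom {B | ∃ f ε, 0 < ε ∧ B = uBall I f ε}

/-- `B_m(f, I, u) = {g ∈ C(X) : |f x - g x| < u x for all x ∈ X and f - g ∈ I}`. -/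
def mBall {X : Type*} [TopologicalSpace X] (I : Ideal C(X, ℝ)) (f u : C(X, ℝ)) :
    Set C(X, ℝ) :=
  {g | (∀ x, |f x - g x| < u x) ∧ f - g ∈ I}

/-- The `m^I`-topology on `C(X)`, with open base
`{B_m(f, I, u) : f ∈ C(X), u ∈ C₊(X)}`. -/
def mTopology {X : Type*} [TopologicalSpace X] (I : Ideal C(X, ℝ)) :
    TopologicalSpace C(X, ℝ) :=
  TopologicalSpace.generateFrom {B | ∃ f u, (∀ x, 0 < u x) ∧ B = mBall I f u}

/-- A subset `Y` of `X` is bounded if every `f ∈ C(X)` is bounded on `Y`. -/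
def BoundedOn {X : Type*} [TopologicalSpace X] (Y : Set X) : Prop :=
  ∀ f : C(X, ℝ), ∃ M : ℝ, ∀ x ∈ Y, |f x| ≤ M

/-- `X` is `I`-pseudocompact if `X ∖ ⋂ Z[I]` is a bounded subset of `X`. -/
def IPseudocompact {X : Type*} [TopologicalSpace X] (I : Ideal C(X, ℝ)) : Prop :=
  BoundedOn (zInter I)ᶜ

/-- A subset `S` of `X` is pseudocompact (as a subspace) if every continuous
real-valued function on the subspace `S` is bounded. -/
def PseudocompactOn {X : Type*} [TopologicalSpace X] (S : Set X) : Prop :=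
  ∀ g : C(S, ℝ), ∃ M : ℝ, ∀ y : S, |g y| ≤ M


section Aux

variable {X : Type*} [TopologicalSpace X] (I : Ideal C(X, ℝ))

lemma uBall_mem_self (f : C(X, ℝ)) {ε : ℝ} (hε : 0 < ε) : f ∈ uBall I f ε :=
  ⟨⟨0, hε, fun x => by simp⟩, by simp⟩

lemma uBall_mono (g : C(X, ℝ)) {δ δ' : ℝ} (h : δ' ≤ δ) : uBall I g δ' ⊆ uBall I g δ := by
  rintro h' ⟨⟨M, hM, hMb⟩, hI⟩
  exact ⟨⟨M, lt_of_lt_of_le hM h, hMb⟩, hI⟩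

lemma uBall_shrink {f g : C(X, ℝ)} {ε : ℝ} (hg : g ∈ uBall I f ε) :
    ∃ δ > 0, uBall I g δ ⊆ uBall I f ε := by
  obtain ⟨⟨M, hM, hMb⟩, hfg⟩ := hg
  refine ⟨ε - M, by linarith, ?_⟩
  rintro h ⟨⟨M', hM', hM'b⟩, hgh⟩
  refine ⟨⟨M + M', by linarith, fun x => ?_⟩, ?_⟩
  · calc |f x - h x| ≤ |f x - g x| + |g x - h x| := abs_sub_le _ _ _
      _ ≤ M + M' := add_le_add (hMb x) (hM'b x)
  · have := I.add_mem hfg hgh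
    rwa [sub_add_sub_cancel] at this

lemma isOpen_gen {α : Type*} {S : Set (Set α)} {s : Set α}
    (h : ∀ x ∈ s, ∃ b ∈ S, x ∈ b ∧ b ⊆ s) : TopologicalSpace.GenerateOpen S s := by
  have hs : s = ⋃₀ {b | b ∈ S ∧ b ⊆ s} := by
    apply subset_antisymm
    · intro x hx
      obtain ⟨b, hb, hxb, hbs⟩ := h x hx
      exact ⟨b, ⟨hb, hbs⟩, hxb⟩
    · exact sUnion_subset fun b hb => hb.2
  rw [hs]
  exact .sUnion _ fun b hb => .basic b hb.1

lemma uOpen_nbhd {s : Set C(X, ℝ)}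
    (hs : TopologicalSpace.GenerateOpen {B | ∃ f ε, 0 < ε ∧ B = uBall I f ε} s) :
    ∀ g ∈ s, ∃ δ > 0, uBall I g δ ⊆ s := by
  induction hs with
  | basic b hb =>
    obtain ⟨f, ε, hε, rfl⟩ := hb
    exact fun g hg => uBall_shrink I hg
  | univ => exact fun g _ => ⟨1, one_pos, subset_univ _⟩
  | inter s t _ _ ihs iht =>
    intro g hg
    obtain ⟨δ1, hδ1, hs1⟩ := ihs g hg.1
    obtain ⟨δ2, hδ2, hs2⟩ := iht g hg.2
    exact ⟨min δ1 δ2, lt_min hδ1 hδ2,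
      fun h hh => ⟨hs1 (uBall_mono I g (min_le_left _ _) hh),
        hs2 (uBall_mono I g (min_le_right _ _) hh)⟩⟩
  | sUnion S _ ih =>
    intro g hg
    obtain ⟨t, ht, hgt⟩ := hg
    obtain ⟨δ, hδ, hsub⟩ := ih t ht g hgt
    exact ⟨δ, hδ, hsub.trans (subset_sUnion_of_mem ht)⟩

end Aux

section Cmp

variable {X : Type*} [TopologicalSpace X] (I : Ideal C(X, ℝ))

/-- The m-topology always refines the u-topology. -/
lemma mTop_le_uTop : mTopology I ≤ uTopology I := by
  apply le_generateFrom
  rintro s ⟨f, ε, hε, rfl⟩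
  show TopologicalSpace.GenerateOpen _ (uBall I f ε)
  apply isOpen_gen
  rintro g ⟨⟨M, hM, hMb⟩, hfg⟩
  set c : ℝ := (ε - M) / 2 with hc
  have hcpos : 0 < c := by simp only [hc]; linarith
  refine ⟨mBall I g (ContinuousMap.const X c), ⟨g, _, fun x => hcpos, rfl⟩, ?_, ?_⟩
  · exact ⟨fun x => by simpa using hcpos, by simp⟩
  · rintro h ⟨hh1, hh2⟩
    refine ⟨⟨M + c, by simp only [hc]; linarith, fun x => ?_⟩, ?_⟩
    · calc |f x - h x| ≤ |f x - g x| + |g x - h x| := abs_sub_le _ _ _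
        _ ≤ M + c := add_le_add (hMb x) (le_of_lt (by simpa using hh1 x))
    · have := I.add_mem hfg hh2
      rwa [sub_add_sub_cancel] at this

/-- Under I-pseudocompactness, the u-topology refines the m-topology. -/
lemma uTop_le_mTop (hP : IPseudocompact I) : uTopology I ≤ mTopology I := by
  apply le_generateFrom
  rintro s ⟨f, u, hu, rfl⟩
  show TopologicalSpace.GenerateOpen _ (mBall I f u)
  apply isOpen_gen
  rintro g ⟨hg1, hg2⟩
  have hv : ∀ x, 0 < u x - |f x - g x| := fun x => by linarith [hg1 x]
  have hwc : Continuous fun x => (u x - |f x - g x|)⁻¹ := by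
    apply Continuous.inv₀
    · exact u.continuous.sub (f.continuous.sub g.continuous).abs
    · exact fun x => (hv x).ne'
  obtain ⟨M, hM⟩ := hP ⟨_, hwc⟩
  set K : ℝ := max M 1 with hK
  have hKpos : 0 < K := lt_of_lt_of_le one_pos (le_max_right M 1)
  refine ⟨uBall I g K⁻¹, ⟨g, K⁻¹, inv_pos.2 hKpos, rfl⟩, uBall_mem_self I g (inv_pos.2 hKpos), ?_⟩
  rintro h ⟨⟨M', hM', hM'b⟩, hgh⟩
  have hfh : f - h ∈ I := by
    have := I.add_mem hg2 hgh
    rwa [sub_add_sub_cancel] at this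
  refine ⟨fun x => ?_, hfh⟩
  by_cases hx : x ∈ zInter I
  · have h0 : (f - h) x = 0 := hx _ hfh
    have : f x - h x = 0 := by simpa using h0
    rw [this, abs_zero]
    exact hu x
  · have hw : |(u x - |f x - g x|)⁻¹| ≤ M := hM x hx
    have hvinv : (u x - |f x - g x|)⁻¹ ≤ K :=
      le_trans (le_abs_self _) (le_trans hw (le_max_left M 1))
    have h1 : K⁻¹ ≤ u x - |f x - g x| := by
      rw [inv_eq_one_div, div_le_iff₀ hKpos]
      have h2 : (u x - |f x - g x|) * (u x - |f x - g x|)⁻¹ = 1 :=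
        mul_inv_cancel₀ (hv x).ne'
      nlinarith [mul_le_mul_of_nonneg_left hvinv (hv x).le]
    calc |f x - h x| ≤ |f x - g x| + |g x - h x| := abs_sub_le _ _ _
      _ ≤ |f x - g x| + M' := by linarith [hM'b x]
      _ < |f x - g x| + K⁻¹ := by linarith
      _ ≤ u x := by linarith

end Cmp

/-- the `u^I`-topology and the `m^I`-topology on `C(X)` coincide
if and only if `X` is `I`-pseudocompact. -/
theorem stmt_1 {X : Type*} [TopologicalSpace X] [T35Space X] (I : Ideal C(X, ℝ)) :
    uTopology I = mTopology I ↔ IPseudocompact I := by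
  constructor
  · intro heq
    by_contra hnot
    simp only [IPseudocompact, BoundedOn, not_forall, not_exists] at hnot
    obtain ⟨f, hf⟩ := hnot
    -- hf : ∀ M, ¬ ∀ x ∈ (zInter I)ᶜ, |f x| ≤ M
    set u : C(X, ℝ) := ⟨fun x => (1 + f x ^ 2)⁻¹,
      Continuous.inv₀ (by continuity) (fun x => by positivity)⟩ with hudef
    have hu : ∀ x, 0 < u x := fun x => by
      show 0 < (1 + f x ^ 2)⁻¹
      positivity
    have hmem0 : (0 : C(X, ℝ)) ∈ mBall I 0 u :=
      ⟨fun x => by simpa using hu x, by simp⟩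
    have hopen : (uTopology I).IsOpen (mBall I 0 u) := by
      rw [heq]
      exact TopologicalSpace.GenerateOpen.basic _ ⟨0, u, hu, rfl⟩
    obtain ⟨δ, hδ, hsub⟩ := uOpen_nbhd I hopen 0 hmem0
    -- pick x0 outside zInter with |f x0| large
    have hf' := hf (Real.sqrt (2 / δ))
    push_neg at hf'
    obtain ⟨x0, hx0K, hx0⟩ := hf'
    have hsq : 2 / δ < f x0 ^ 2 := by
      have h1 : Real.sqrt (2 / δ) ^ 2 = 2 / δ := Real.sq_sqrt (by positivity)
      nlinarith [sq_abs (f x0), Real.sqrt_nonneg (2 / δ)]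
    have hux0 : u x0 < δ / 2 := by
      show (1 + f x0 ^ 2)⁻¹ < δ / 2
      have h1 : (1 + f x0 ^ 2)⁻¹ < (2 / δ)⁻¹ := by
        apply inv_strictAnti₀ (by positivity)
        linarith
      rwa [inv_div, show (δ : ℝ) / 2 = δ / 2 from rfl] at h1
    -- x0 not in zInter: get g0 ∈ I with g0 x0 ≠ 0
    have : ¬ ∀ g ∈ I, g x0 = 0 := hx0K
    push_neg at this
    obtain ⟨g0, hg0I, hg0⟩ := this
    have h0 : 0 < g0 x0 ^ 2 := by positivity
    have hqpos : ∀ x, 0 < g0 x0 ^ 2 ⊔ g0 x ^ 2 :=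
      fun x => lt_of_lt_of_le h0 (le_max_left _ _)
    set k : C(X, ℝ) := ⟨fun x => δ / 2 * g0 x / (g0 x0 ^ 2 ⊔ g0 x ^ 2),
      Continuous.div (by continuity) ((continuous_const).max ((g0.continuous.pow 2))) (fun x => (hqpos x).ne')⟩ with hkdef
    set h : C(X, ℝ) := g0 * k with hhdef
    have hhI : h ∈ I := I.mul_mem_right k hg0I
    have hhval : ∀ x, h x = δ / 2 * g0 x ^ 2 / (g0 x0 ^ 2 ⊔ g0 x ^ 2) := fun x => by
      show g0 x * (δ / 2 * g0 x / (g0 x0 ^ 2 ⊔ g0 x ^ 2)) = _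
      ring
    have hhb : ∀ x, |h x| ≤ δ / 2 := by
      intro x
      rw [hhval x, abs_of_nonneg (by positivity)]
      rw [div_le_iff₀ (hqpos x)]
      nlinarith [le_max_right (g0 x0 ^ 2) (g0 x ^ 2), sq_nonneg (g0 x)]
    have hhu : h ∈ uBall I 0 δ := by
      refine ⟨⟨δ / 2, by linarith, fun x => ?_⟩, ?_⟩
      · simpa using hhb x
      · simpa using I.neg_mem hhI
    have hhm := hsub hhu
    have hcontra := hhm.1 x0
    rw [show (0 : C(X, ℝ)) x0 - h x0 = -(h x0) by simp, abs_neg, hhval x0] at hcontra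
    rw [max_self, mul_div_assoc, div_self h0.ne', mul_one] at hcontra
    rw [abs_of_nonneg (by positivity)] at hcontra
    linarith
  · intro hP
    exact le_antisymm (uTop_le_mTop I hP) (mTop_le_uTop I)
end

section
/- Let I be an ideal of C(X). The space C(X) equipped with the m^I-topology is first countable if and only if X is I-pseudocompact. -/
open Set Topology TopologicalSpace Pointwise

section Aux


variable {X : Type*} [TopologicalSpace X] (I : Ideal C(X, ℝ))

lemma mem_mBall_self (f u : C(X, ℝ)) (hu : ∀ x, 0 < u x) : f ∈ mBall I f u :=
  ⟨fun x => by simpa using hu x, by simp⟩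

lemma mBall_isOpen (f u : C(X, ℝ)) (hu : ∀ x, 0 < u x) :
    IsOpen[mTopology I] (mBall I f u) :=
  TopologicalSpace.isOpen_generateFrom_of_mem ⟨f, u, hu, rfl⟩

lemma exists_mBall_subset {s : Set C(X, ℝ)}
    (hs : TopologicalSpace.GenerateOpen {B | ∃ f u, (∀ x, 0 < u x) ∧ B = mBall I f u} s) :
    ∀ f ∈ s, ∃ u : C(X, ℝ), (∀ x, 0 < u x) ∧ mBall I f u ⊆ s := by
  induction hs with
  | basic B hB =>
      obtain ⟨f₀, u₀, hu₀, rfl⟩ := hB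
      intro g hg
      obtain ⟨hg1, hg2⟩ := hg
      refine ⟨u₀ - |f₀ - g|, fun x => ?_, ?_⟩
      · have := hg1 x
        simp only [ContinuousMap.sub_apply, ContinuousMap.abs_apply]
        linarith
      · rintro h ⟨hh1, hh2⟩
        refine ⟨fun x => ?_, ?_⟩
        · have h1 := hh1 x
          simp only [ContinuousMap.sub_apply, ContinuousMap.abs_apply] at h1
          have h2 := abs_sub_le (f₀ x) (g x) (h x)
          linarith
        · have heq : f₀ - h = (f₀ - g) + (g - h) := by ring
          rw [heq]; exact I.add_mem hg2 hh2
  | univ => exact fun f _ => ⟨1, fun x => by simp, Set.subset_univ _⟩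
  | inter s t _ _ ihs iht =>
      intro f hf
      obtain ⟨u1, hu1, h1⟩ := ihs f hf.1
      obtain ⟨u2, hu2, h2⟩ := iht f hf.2
      refine ⟨u1 ⊓ u2, fun x => ?_,
        fun g hg => ⟨h1 ⟨fun x => ?_, hg.2⟩, h2 ⟨fun x => ?_, hg.2⟩⟩⟩
      · simp only [ContinuousMap.inf_apply, lt_inf_iff]
        exact ⟨hu1 x, hu2 x⟩
      · have := hg.1 x
        simp only [ContinuousMap.inf_apply] at this
        exact this.trans_le inf_le_left
      · have := hg.1 x
        simp only [ContinuousMap.inf_apply] at this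
        exact this.trans_le inf_le_right
  | sUnion S hS ih =>
      intro f hf
      obtain ⟨t, htS, hft⟩ := hf
      obtain ⟨u, hu, hsub⟩ := ih t htS f hft
      exact ⟨u, hu, hsub.trans (Set.subset_sUnion_of_mem htS)⟩


lemma mI_backward (hp : IPseudocompact I) :
    @FirstCountableTopology C(X, ℝ) (mTopology I) := by
  letI := mTopology I
  refine ⟨fun f => ?_⟩
  have hb : (𝓝 f).HasBasis (fun _ : ℕ => True)
      (fun n => mBall I f (ContinuousMap.const X (1 / ((n : ℝ) + 1)))) := by
    rw [Filter.hasBasis_iff]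
    intro s
    constructor
    · intro hs
      obtain ⟨t, hts, hto, hft⟩ := mem_nhds_iff.mp hs
      obtain ⟨u, hu, hsub⟩ := exists_mBall_subset I hto f hft
      obtain ⟨M, hM⟩ := hp ⟨fun x => (u x)⁻¹, by
        exact u.continuous.inv₀ fun x => (hu x).ne'⟩
      obtain ⟨n, hn⟩ := exists_nat_gt (max M 0)
      refine ⟨n, trivial, Set.Subset.trans ?_ (hsub.trans hts)⟩
      rintro g ⟨hg1, hg2⟩
      refine ⟨fun x => ?_, hg2⟩
      by_cases hx : x ∈ zInter I
      · have h0 : (f - g) x = 0 := hx _ hg2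
        simp only [ContinuousMap.sub_apply] at h0
        rw [show f x - g x = 0 by linarith, abs_zero]
        exact hu x
      · have h1 : (u x)⁻¹ ≤ M := (le_abs_self _).trans (hM x hx)
        have hux := hu x
        have h2 : (u x)⁻¹ < (n : ℝ) + 1 := by
          have : M ≤ max M 0 := le_max_left _ _
          linarith
        have h3 : (1 : ℝ) / ((n : ℝ) + 1) ≤ u x := by
          rw [div_le_iff₀ (by positivity)]
          have h4 := mul_le_mul_of_nonneg_left h2.le hux.le
          rw [mul_inv_cancel₀ hux.ne'] at h4
          linarith
        have hgx := hg1 x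
        simp only [ContinuousMap.const_apply] at hgx
        linarith
    · rintro ⟨n, -, hsub⟩
      have hpos : ∀ x : X, 0 < (ContinuousMap.const X (1 / ((n : ℝ) + 1))) x := by
        intro x; simp only [ContinuousMap.const_apply]; positivity
      exact Filter.mem_of_superset
        ((mBall_isOpen I f _ hpos).mem_nhds (mem_mBall_self I f _ hpos)) hsub
  exact hb.isCountablyGenerated

lemma mI_forward (hFC : @FirstCountableTopology C(X, ℝ) (mTopology I)) :
    IPseudocompact I := by
  by_contra hnp
  simp only [IPseudocompact, BoundedOn, not_forall, not_exists] at hnp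
  obtain ⟨f, hf⟩ := hnp
  -- hf : ∀ M, ¬ ∀ x ∈ Y, |f x| ≤ M
  have hf' : ∀ M : ℝ, ∃ x ∈ (zInter I)ᶜ, M < |f x| := by
    intro M
    have := hf M
    push_neg at this
    simpa using this
  letI := mTopology I
  haveI := hFC
  obtain ⟨s, hs⟩ := (𝓝 (0 : C(X, ℝ))).exists_antitone_basis
  -- pick balls inside the basis sets
  have hU : ∀ n : ℕ, ∃ u : C(X, ℝ), (∀ x, 0 < u x) ∧ mBall I 0 u ⊆ s n := by
    intro n
    have hmem : s n ∈ 𝓝 (0 : C(X, ℝ)) := hs.toHasBasis.mem_of_mem trivial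
    obtain ⟨t, hts, hto, hft⟩ := mem_nhds_iff.mp hmem
    obtain ⟨u, hu, hsub⟩ := exists_mBall_subset I hto 0 hft
    exact ⟨u, hu, hsub.trans hts⟩
  choose U hUpos hUsub using hU
  -- pick points where f is large
  choose x hxY hxn using fun n : ℕ => hf' (n : ℝ)
  set c : ℕ → ℝ := fun n => U n (x n) / 4 with hc_def
  have hc : ∀ n, 0 < c n := fun n => by
    have := hUpos n (x n); simp only [hc_def]; linarith
  set t : ℕ → ℝ := fun n => |f (x n)| with ht_def
  have htn : ∀ n : ℕ, (n : ℝ) < t n := fun n => hxn n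
  -- the competitor radius function u = G ∘ |f|
  set G : ℝ → ℝ := fun r => ⨅ n : ℕ, (c n + |r - t n|) with hG_def
  have hbdd : ∀ r : ℝ, BddBelow (Set.range fun n : ℕ => c n + |r - t n|) := by
    intro r
    refine ⟨0, ?_⟩
    rintro _ ⟨n, rfl⟩
    show 0 ≤ c n + |r - t n|
    have := hc n
    have := abs_nonneg (r - t n)
    linarith
  have hG_le_term : ∀ (r : ℝ) (n : ℕ), G r ≤ c n + |r - t n| :=
    fun r n => ciInf_le (hbdd r) n
  have hG_lip : ∀ r q : ℝ, G r ≤ G q + |r - q| := by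
    intro r q
    have key : ∀ n : ℕ, G r - |r - q| ≤ c n + |q - t n| := by
      intro n
      have h1 := hG_le_term r n
      have h2 := abs_sub_le r q (t n)
      linarith
    have := le_ciInf key
    simp only [hG_def] at this ⊢
    linarith
  have hGc : Continuous G := by
    have : LipschitzWith 1 G := by
      apply LipschitzWith.of_dist_le_mul
      intro a b
      rw [Real.dist_eq, Real.dist_eq, NNReal.coe_one, one_mul]
      have h1 := hG_lip a b
      have h2 := hG_lip b a
      rw [abs_sub_comm b a] at h2
      rw [abs_le]
      constructor <;> linarith
    exact this.continuous
  have hGpos : ∀ r : ℝ, 0 ≤ r → 0 < G r := by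
    intro r hr
    obtain ⟨N, hN⟩ := exists_nat_gt r
    have hne : (Finset.range (N + 1)).Nonempty := Finset.nonempty_range_iff.mpr (Nat.succ_ne_zero N)
    set δ : ℝ := min 1 ((Finset.range (N + 1)).inf' hne c) with hδ_def
    have hδpos : 0 < δ := by
      rw [hδ_def]
      apply lt_min one_pos
      rw [Finset.lt_inf'_iff]
      exact fun i _ => hc i
    have hδle : ∀ n : ℕ, δ ≤ c n + |r - t n| := by
      intro n
      rcases le_or_gt n N with hn | hn
      · have h1 : δ ≤ c n := by
          rw [hδ_def]
          exact (min_le_right _ _).trans (Finset.inf'_le c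
            (Finset.mem_range.mpr (Nat.lt_succ_of_le hn)))
        have := abs_nonneg (r - t n)
        linarith
      · have h1 : r + 1 ≤ (n : ℝ) := by
          have : (N : ℝ) + 1 ≤ (n : ℝ) := by exact_mod_cast hn
          linarith
        have h2 := htn n
        have h3 : 1 ≤ |r - t n| := by
          rw [abs_sub_comm]
          calc (1 : ℝ) ≤ t n - r := by linarith
            _ ≤ |t n - r| := le_abs_self _
        have h4 : δ ≤ 1 := min_le_left _ _
        have := hc n
        linarith
    calc 0 < δ := hδpos
      _ ≤ G r := le_ciInf hδle
  set u : C(X, ℝ) := ⟨fun y => G |f y|, hGc.comp (continuous_abs.comp f.continuous)⟩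
    with hu_def
  have hupos : ∀ y, 0 < u y := fun y => hGpos _ (abs_nonneg _)
  have hule : ∀ n : ℕ, u (x n) ≤ c n := by
    intro n
    have := hG_le_term (t n) n
    simpa [hu_def, ht_def] using this
  -- mBall I 0 u is a neighborhood of 0, so contains some s n, hence some mBall I 0 (U n)
  have hmem : mBall I 0 u ∈ 𝓝 (0 : C(X, ℝ)) :=
    (mBall_isOpen I 0 u hupos).mem_nhds (mem_mBall_self I 0 u hupos)
  obtain ⟨n, -, hsn⟩ := hs.toHasBasis.mem_iff.mp hmem
  have hUsub' : mBall I 0 (U n) ⊆ mBall I 0 u := (hUsub n).trans hsn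
  -- build the contradicting function g
  have hxmem : ∃ h ∈ I, h (x n) ≠ 0 := by
    have := hxY n
    simp only [zInter, Set.mem_compl_iff, Set.mem_setOf_eq, not_forall] at this
    obtain ⟨h, hhI, hh⟩ := this
    exact ⟨h, hhI, hh⟩
  obtain ⟨h, hhI, hane⟩ := hxmem
  set a : ℝ := h (x n) with ha_def
  have ha2 : 0 < a ^ 2 := by positivity
  have hden : ∀ y : X, (0 : ℝ) < h y ^ 2 + a ^ 2 := by
    intro y
    have := sq_nonneg (h y)
    linarith
  set w : C(X, ℝ) := ⟨fun y => h y / (h y ^ 2 + a ^ 2), by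
    apply Continuous.div
    · exact h.continuous
    · exact (h.continuous.pow 2).add continuous_const
    · exact fun y => (hden y).ne'⟩ with hw_def
  set g : C(X, ℝ) := ContinuousMap.const X (1 / 2 : ℝ) * U n * w * h with hg_def
  have hgI : g ∈ I := Ideal.mul_mem_left I _ hhI
  have hg_apply : ∀ y, g y = (1 / 2 * U n y) * (h y ^ 2 / (h y ^ 2 + a ^ 2)) := by
    intro y
    simp only [hg_def, ContinuousMap.mul_apply, ContinuousMap.const_apply, hw_def,
      ContinuousMap.coe_mk]
    ring
  have hg_nonneg : ∀ y, 0 ≤ g y := by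
    intro y
    rw [hg_apply y]
    have h1 := (hUpos n y).le
    have h2 := (hden y).le
    have h3 := sq_nonneg (h y)
    positivity
  have hg_lt : ∀ y, g y < U n y := by
    intro y
    rw [hg_apply y]
    have hq : h y ^ 2 / (h y ^ 2 + a ^ 2) ≤ 1 := by
      rw [div_le_one (hden y)]
      linarith
    have hU := hUpos n y
    nlinarith [sq_nonneg (h y), hden y, div_nonneg (sq_nonneg (h y)) (hden y).le]
  have hg_val : g (x n) = c n := by
    rw [hg_apply (x n), ← ha_def, hc_def]
    field_simp
    ring
  -- g ∈ mBall I 0 (U n)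
  have hg_mem : g ∈ mBall I 0 (U n) := by
    refine ⟨fun y => ?_, ?_⟩
    · simp only [ContinuousMap.zero_apply, zero_sub, abs_neg]
      rw [abs_of_nonneg (hg_nonneg y)]
      exact hg_lt y
    · simpa using I.neg_mem hgI
  have hcontra := (hUsub' hg_mem).1 (x n)
  simp only [ContinuousMap.zero_apply, zero_sub, abs_neg] at hcontra
  rw [abs_of_nonneg (hg_nonneg (x n)), hg_val] at hcontra
  have := hule n
  linarith

end Aux

/-- `C(X)` with the `m^I`-topology is first countable
if and only if `X` is `I`-pseudocompact. -/
theorem stmt_2 {X : Type*} [TopologicalSpace X] [T35Space X] (I : Ideal C(X, ℝ)) :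
    @FirstCountableTopology C(X, ℝ) (mTopology I) ↔ IPseudocompact I := by
  exact ⟨mI_forward I, mI_backward I⟩
end

section
/- Let I be an ideal of C(X). The ring C(X) equipped with the u^I-topology is a topological ring (i.e., multiplication C(X) × C(X) → C(X) is continuous, in addition to the ring's additive structure being continuous) if and only if X is I-pseudocompact. -/
open Set Topology TopologicalSpace Pointwise

namespace UTopAux

variable {X : Type*} [TopologicalSpace X] (I : Ideal C(X, ℝ))

lemma mem_uBall_self {ε : ℝ} (hε : 0 < ε) (f : C(X, ℝ)) : f ∈ uBall I f ε :=
  ⟨⟨0, hε, fun x => by simp⟩, by simp⟩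

lemma uBall_mono (f : C(X, ℝ)) {δ ε : ℝ} (h : δ ≤ ε) : uBall I f δ ⊆ uBall I f ε := by
  rintro g ⟨⟨M, hM, hle⟩, hfg⟩
  exact ⟨⟨M, lt_of_lt_of_le hM h, hle⟩, hfg⟩

lemma uBall_subset {f g : C(X, ℝ)} {ε : ℝ} (hg : g ∈ uBall I f ε) :
    ∃ δ > 0, uBall I g δ ⊆ uBall I f ε := by
  obtain ⟨⟨M, hM, hle⟩, hfg⟩ := hg
  refine ⟨ε - M, by linarith, ?_⟩
  rintro g' ⟨⟨M', hM', hle'⟩, hgg'⟩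
  refine ⟨⟨M + M', by linarith, fun x => ?_⟩, ?_⟩
  · rw [show f x - g' x = (f x - g x) + (g x - g' x) by ring]
    exact (abs_add_le _ _).trans (add_le_add (hle x) (hle' x))
  · rw [show f - g' = (f - g) + (g - g') by ring]
    exact I.add_mem hfg hgg'

lemma exists_uBall_subset {U : Set C(X, ℝ)}
    (hU : GenerateOpen {B | ∃ f ε, 0 < ε ∧ B = uBall I f ε} U) :
    ∀ f ∈ U, ∃ δ > 0, uBall I f δ ⊆ U := by
  induction hU with
  | basic s hs =>
      obtain ⟨p, ε, hε, rfl⟩ := hs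
      exact fun f hf => uBall_subset I hf
  | univ => exact fun f _ => ⟨1, one_pos, subset_univ _⟩
  | inter s t _ _ ihs iht =>
      intro f hf
      obtain ⟨δ₁, h1, hs1⟩ := ihs f hf.1
      obtain ⟨δ₂, h2, hs2⟩ := iht f hf.2
      exact ⟨min δ₁ δ₂, lt_min h1 h2, subset_inter
        ((uBall_mono I f (min_le_left _ _)).trans hs1)
        ((uBall_mono I f (min_le_right _ _)).trans hs2)⟩
  | sUnion S _ ih =>
      rintro f ⟨s, hsS, hfs⟩
      obtain ⟨δ, hδ, hsub⟩ := ih s hsS f hfs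
      exact ⟨δ, hδ, hsub.trans (subset_sUnion_of_mem hsS)⟩

lemma isOpen_uBall (f : C(X, ℝ)) {ε : ℝ} (hε : 0 < ε) :
    IsOpen[uTopology I] (uBall I f ε) :=
  GenerateOpen.basic _ ⟨f, ε, hε, rfl⟩

lemma continuous_to_uTop {α : Type*} [tα : TopologicalSpace α] {F : α → C(X, ℝ)}
    (h : ∀ (p : C(X, ℝ)) (ε : ℝ), 0 < ε → IsOpen (F ⁻¹' uBall I p ε)) :
    Continuous[tα, uTopology I] F := by
  apply continuous_generateFrom_iff.mpr
  rintro s ⟨p, ε, hε, rfl⟩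
  exact h p ε hε

end UTopAux

/-- `C(X)` with the `u^I`-topology is a topological ring
if and only if `X` is `I`-pseudocompact. -/


theorem stmt_3 {X : Type*} [TopologicalSpace X] [T35Space X] (I : Ideal C(X, ℝ)) :
    @IsTopologicalRing C(X, ℝ) (uTopology I) inferInstance ↔ IPseudocompact I := by
  constructor
  · -- topological ring → I-pseudocompact
    intro hTR
    by_contra hnb
    simp only [IPseudocompact, BoundedOn] at hnb
    push_neg at hnb
    obtain ⟨f, hf⟩ := hnb
    letI := uTopology I
    haveI := hTR
    have hc : Continuous (fun g : C(X, ℝ) => g * g) := continuous_id.mul continuous_id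
    have hopen := (UTopAux.isOpen_uBall I (f * f) one_pos).preimage hc
    have hmem : f ∈ (fun g : C(X, ℝ) => g * g) ⁻¹' uBall I (f * f) 1 :=
      UTopAux.mem_uBall_self I one_pos (f * f)
    obtain ⟨δ, hδ, hsub⟩ := UTopAux.exists_uBall_subset I hopen f hmem
    obtain ⟨x₀, hx₀, hfx₀⟩ := hf (2 / δ + δ + 1)
    have hx₀' : ∃ g ∈ I, g x₀ ≠ 0 := by
      simp only [zInter, mem_compl_iff, mem_setOf_eq] at hx₀
      push_neg at hx₀
      exact hx₀
    obtain ⟨g, hgI, hg0⟩ := hx₀'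
    set c : ℝ := (g x₀) ^ 2 with hc_def
    have hcpos : 0 < c := by positivity
    have hden : ∀ x : X, 0 < c + (g x) ^ 2 := fun x => by positivity
    let k : C(X, ℝ) := ⟨fun x => (δ / 2) * g x / (c + (g x) ^ 2),
      Continuous.div (by fun_prop) (by fun_prop) (fun x => (hden x).ne')⟩
    set h : C(X, ℝ) := k * g with hh_def
    have hhI : h ∈ I := I.mul_mem_left k hgI
    have hval : ∀ x, h x = (δ / 2) * (g x) ^ 2 / (c + (g x) ^ 2) := by
      intro x
      simp only [hh_def, ContinuousMap.mul_apply, ContinuousMap.coe_mk, k]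
      ring
    have hbound : ∀ x, |h x| ≤ δ / 2 := by
      intro x
      rw [hval x, abs_of_nonneg (by positivity)]
      rw [div_le_iff₀ (hden x)]
      nlinarith [sq_nonneg (g x), hcpos, hδ]
    have hx₀val : h x₀ = δ / 4 := by
      rw [hval x₀, ← hc_def]
      field_simp
      ring
    have hmem2 : f + h ∈ uBall I f δ := by
      refine ⟨⟨δ / 2, by linarith, fun x => ?_⟩, ?_⟩
      · simpa using hbound x
      · rw [show f - (f + h) = -h by ring]
        exact I.neg_mem hhI
    obtain ⟨⟨M, hM, hle⟩, _⟩ := Set.mem_preimage.mp (hsub hmem2)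
    have habs := hle x₀
    simp only [ContinuousMap.mul_apply, ContinuousMap.add_apply, hx₀val] at habs
    have hkey : 2 + δ * δ + δ < δ * |f x₀| := by
      have h1 : δ * (2 / δ + δ + 1) = 2 + δ * δ + δ := by field_simp
      nlinarith [mul_lt_mul_of_pos_left hfx₀ hδ]
    rcases le_or_gt 0 (f x₀) with hsign | hsign
    · rw [abs_of_nonneg hsign] at hkey
      rw [abs_le] at habs
      nlinarith [habs.1, habs.2, hM, hδ]
    · rw [abs_of_neg hsign] at hkey
      rw [abs_le] at habs
      nlinarith [habs.1, habs.2, hM, hδ]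
  · -- I-pseudocompact → topological ring
    intro hps
    have hps' : ∀ f : C(X, ℝ), ∃ M : ℝ, ∀ x ∈ (zInter I)ᶜ, |f x| ≤ M := hps
    letI := uTopology I
    haveI hCA : ContinuousAdd C(X, ℝ) := by
      refine ⟨?_⟩
      apply UTopAux.continuous_to_uTop I
      intro p ε hε
      rw [isOpen_prod_iff]
      rintro f g ⟨⟨M₀, hM₀, hb⟩, hpI⟩
      refine ⟨uBall I f ((ε - M₀) / 2), uBall I g ((ε - M₀) / 2),
        UTopAux.isOpen_uBall I f (by linarith), UTopAux.isOpen_uBall I g (by linarith),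
        UTopAux.mem_uBall_self I (by linarith) f, UTopAux.mem_uBall_self I (by linarith) g, ?_⟩
      rintro ⟨f', g'⟩ ⟨⟨⟨M₁, h1, hb1⟩, hf'⟩, ⟨⟨M₂, h2, hb2⟩, hg'⟩⟩
      refine ⟨⟨M₀ + M₁ + M₂, by linarith, fun x => ?_⟩, ?_⟩
      · have e : p x - (f' + g') x = (p x - (f + g) x) + ((f x - f' x) + (g x - g' x)) := by
          simp only [ContinuousMap.add_apply]; ring
        rw [show |p x - (f' + g') x| = |(p x - (f + g) x) + ((f x - f' x) + (g x - g' x))| by rw [e]]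
        calc |(p x - (f + g) x) + ((f x - f' x) + (g x - g' x))|
            ≤ |p x - (f + g) x| + |(f x - f' x) + (g x - g' x)| := abs_add_le _ _
          _ ≤ M₀ + (M₁ + M₂) := add_le_add (hb x)
              ((abs_add_le _ _).trans (add_le_add (hb1 x) (hb2 x)))
          _ = M₀ + M₁ + M₂ := by ring
      · rw [show p - (f' + g') = (p - (f + g)) + (f - f') + (g - g') by ring]
        exact I.add_mem (I.add_mem hpI hf') hg'
    haveI hCN : ContinuousNeg C(X, ℝ) := by
      refine ⟨?_⟩
      apply UTopAux.continuous_to_uTop I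
      intro p ε hε
      have heq : (fun g : C(X, ℝ) => -g) ⁻¹' uBall I p ε = uBall I (-p) ε := by
        ext g
        simp only [mem_preimage, uBall, mem_setOf_eq, ContinuousMap.neg_apply, sub_neg_eq_add]
        constructor <;> rintro ⟨⟨M, hM, hb⟩, hI⟩
        · refine ⟨⟨M, hM, fun x => ?_⟩, ?_⟩
          · have := hb x
            show |(-p) x - g x| ≤ M
            simp only [ContinuousMap.neg_apply]
            rw [show -p x - g x = -(p x + g x) by ring, abs_neg]
            exact this
          · rw [show -p - g = -(p + g) by ring]
            exact I.neg_mem hI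
        · refine ⟨⟨M, hM, fun x => ?_⟩, ?_⟩
          · have := hb x
            rw [show p x + g x = -(-p x - g x) by ring, abs_neg]
            exact this
          · have := I.neg_mem hI
            rw [show -(-p - g) = p + g by ring] at this
            exact this
      rw [heq]
      exact UTopAux.isOpen_uBall I (-p) hε
    haveI hCM : ContinuousMul C(X, ℝ) := by
      refine ⟨?_⟩
      apply UTopAux.continuous_to_uTop I
      intro p ε hε
      rw [isOpen_prod_iff]
      rintro f g ⟨⟨M₀, hM₀, hb⟩, hpI⟩
      obtain ⟨A₁, hA₁⟩ := hps' f
      obtain ⟨A₂, hA₂⟩ := hps' g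
      set r := ε - M₀ with hr
      have hrpos : 0 < r := by simp only [hr]; linarith
      set A := max (max A₁ A₂) 0 with hA
      have hA0 : 0 ≤ A := le_max_right _ _
      have hAf : ∀ x ∈ (zInter I)ᶜ, |f x| ≤ A := fun x hx =>
        (hA₁ x hx).trans ((le_max_left _ _).trans (le_max_left _ _))
      have hAg : ∀ x ∈ (zInter I)ᶜ, |g x| ≤ A := fun x hx =>
        (hA₂ x hx).trans ((le_max_right _ _).trans (le_max_left _ _))
      set δ := min 1 (r / (2 * (2 * A + 1))) with hδdef
      have hδpos : 0 < δ := lt_min one_pos (by positivity)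
      have hδ1 : δ ≤ 1 := min_le_left _ _
      have hδr : δ * (2 * A + 1) ≤ r / 2 := by
        have h := min_le_right 1 (r / (2 * (2 * A + 1)))
        rw [le_div_iff₀ (by positivity)] at h
        calc δ * (2 * A + 1) = (min 1 (r / (2 * (2 * A + 1)))) * (2 * A + 1) := by rw [hδdef]
          _ ≤ r / 2 := by nlinarith
      refine ⟨uBall I f δ, uBall I g δ, UTopAux.isOpen_uBall I f hδpos,
        UTopAux.isOpen_uBall I g hδpos, UTopAux.mem_uBall_self I hδpos f,
        UTopAux.mem_uBall_self I hδpos g, ?_⟩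
      rintro ⟨f', g'⟩ ⟨⟨⟨M₁, h1, hb1⟩, hf'⟩, ⟨⟨M₂, h2, hb2⟩, hg'⟩⟩
      have hM₁' : ∀ x, |f x - f' x| ≤ δ := fun x => (hb1 x).trans h1.le
      have hM₂' : ∀ x, |g x - g' x| ≤ δ := fun x => (hb2 x).trans h2.le
      refine ⟨⟨M₀ + r / 2, by simp only [hr]; linarith, fun x => ?_⟩, ?_⟩
      · simp only [ContinuousMap.mul_apply]
        by_cases hx : x ∈ zInter I
        · have e1 : f x = f' x := by
            have := hx _ hf'
            simp only [ContinuousMap.sub_apply] at this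
            linarith
          have e2 : g x = g' x := by
            have := hx _ hg'
            simp only [ContinuousMap.sub_apply] at this
            linarith
          have hbx := hb x
          simp only [ContinuousMap.mul_apply] at hbx
          rw [← e1, ← e2]
          linarith
        · have hfA := hAf x hx
          have hgA := hAg x hx
          have hg'A : |g' x| ≤ A + δ := by
            rw [show g' x = g x - (g x - g' x) by ring]
            exact (abs_sub _ _).trans (add_le_add hgA (hM₂' x))
          have hbx := hb x
          simp only [ContinuousMap.mul_apply] at hbx
          have e : p x - f' x * g' x =
              (p x - f x * g x) + (f x * (g x - g' x) + (f x - f' x) * g' x) := by ring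
          rw [e]
          have t1 : |f x * (g x - g' x)| ≤ A * δ := by
            rw [abs_mul]
            exact mul_le_mul hfA (hM₂' x) (abs_nonneg _) hA0
          have t2 : |(f x - f' x) * g' x| ≤ δ * (A + δ) := by
            rw [abs_mul]
            exact mul_le_mul (hM₁' x) hg'A (abs_nonneg _) hδpos.le
          calc |(p x - f x * g x) + (f x * (g x - g' x) + (f x - f' x) * g' x)|
              ≤ |p x - f x * g x| + |f x * (g x - g' x) + (f x - f' x) * g' x| := abs_add_le _ _
            _ ≤ M₀ + (A * δ + δ * (A + δ)) := add_le_add hbx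
                ((abs_add_le _ _).trans (add_le_add t1 t2))
            _ ≤ M₀ + r / 2 := by nlinarith
      · rw [show p - f' * g' = (p - f * g) + f * (g - g') + (f - f') * g' by ring]
        exact I.add_mem (I.add_mem hpI (I.mul_mem_left f hg')) (I.mul_mem_right g' hf')
    exact { toContinuousAdd := hCA, toContinuousMul := hCM, toContinuousNeg := hCN }
end

section
/- Let I be an ideal of C(X). Then X is I-pseudocompact if and only if there exists a countable family F ⊆ C(X) that is dominating on X ∖ ⋂Z[I], i.e., for every f ∈ C(X) there is g ∈ F with f(x) ≤ g(x) for all x ∈ X ∖ ⋂Z[I]. -/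
open Set Topology TopologicalSpace Pointwise

/-- Auxiliary: a continuous function `φ : ℝ → ℝ` with `φ t ≥ d n` whenever `t ≥ n + 1`,
for a monotone sequence `d`. -/
lemma exists_phi (d : ℕ → ℝ) (hd : ∀ k, d k ≤ d (k + 1)) :
    ∃ φ : ℝ → ℝ, Continuous φ ∧ ∀ (n : ℕ) (t : ℝ), (n : ℝ) + 1 ≤ t → d n ≤ φ t := by
  set e : ℕ → ℝ := fun k => d (k + 1) - d k with he
  have he0 : ∀ k, 0 ≤ e k := fun k => sub_nonneg.2 (hd k)
  set term : ℕ → ℝ → ℝ := fun k t => e k * min (max (t - (k + 1)) 0) 1 with hterm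
  have hterm_nonneg : ∀ k t, 0 ≤ term k t := by
    intro k t
    exact mul_nonneg (he0 k) (le_min (le_max_right _ _) zero_le_one)
  set φ : ℝ → ℝ := fun t => d 0 + ∑ k ∈ Finset.range ⌈t⌉₊, term k t with hφ
  have key : ∀ (m : ℕ) (t : ℝ), t ≤ m → φ t = d 0 + ∑ k ∈ Finset.range m, term k t := by
    intro m t htm
    have hsub : Finset.range ⌈t⌉₊ ⊆ Finset.range m := by
      apply Finset.range_subset_range.2
      exact Nat.ceil_le.2 htm
    show d 0 + ∑ k ∈ Finset.range ⌈t⌉₊, term k t = _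
    congr 1
    refine Finset.sum_subset hsub ?_
    intro k hk hk'
    simp only [Finset.mem_range, not_lt] at hk'
    have htk : t ≤ k := le_trans (Nat.le_ceil t) (Nat.cast_le.2 hk')
    have : t - (k + 1) ≤ 0 := by linarith
    simp [hterm, max_eq_right this]
  refine ⟨φ, ?_, ?_⟩
  · rw [continuous_iff_continuousAt]
    intro t₀
    set m : ℕ := ⌈t₀⌉₊ + 1 with hm
    have ht₀m : t₀ < m := lt_of_le_of_lt (Nat.le_ceil t₀) (by exact_mod_cast Nat.lt_succ_self _)
    have hF : Continuous fun t => d 0 + ∑ k ∈ Finset.range m, term k t := by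
      apply continuous_const.add
      apply continuous_finset_sum
      intro k _
      exact continuous_const.mul
        (((continuous_id.sub continuous_const).max continuous_const).min continuous_const)
    apply hF.continuousAt.congr
    filter_upwards [Iio_mem_nhds ht₀m] with t ht
    exact (key m t (le_of_lt ht)).symm
  · intro n t hnt
    have hn : n ≤ ⌈t⌉₊ := by
      have : (n : ℝ) ≤ ⌈t⌉₊ := le_trans (by linarith) (Nat.le_ceil t)
      exact_mod_cast this
    have h1 : ∑ k ∈ Finset.range n, term k t ≤ ∑ k ∈ Finset.range ⌈t⌉₊, term k t := by
      apply Finset.sum_le_sum_of_subset_of_nonneg (Finset.range_subset_range.2 hn)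
      intro k _ _; exact hterm_nonneg k t
    have h2 : ∑ k ∈ Finset.range n, term k t = d n - d 0 := by
      have : ∀ k ∈ Finset.range n, term k t = e k := by
        intro k hk
        have hk' : (k : ℝ) + 1 ≤ n := by
          exact_mod_cast Nat.succ_le_of_lt (Finset.mem_range.1 hk)
        have h1' : (1 : ℝ) ≤ t - (k + 1) := by linarith
        have : max (t - (k + 1)) 0 = t - (k + 1) := max_eq_left (by linarith)
        simp [hterm, this, min_eq_right h1']
      rw [Finset.sum_congr rfl this, he]
      exact Finset.sum_range_sub d n
    have := h2 ▸ h1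
    have : d n - d 0 ≤ ∑ k ∈ Finset.range ⌈t⌉₊, term k t := this
    simp only [hφ]
    linarith

/-- `X` is `I`-pseudocompact if and only if there is a countable
family `F ⊆ C(X)` dominating on `X ∖ ⋂ Z[I]`. -/
theorem stmt_8 {X : Type*} [TopologicalSpace X] [T35Space X] (I : Ideal C(X, ℝ)) :
    IPseudocompact I ↔
      ∃ F : Set C(X, ℝ), F.Countable ∧
        ∀ f : C(X, ℝ), ∃ g ∈ F, ∀ x ∈ (zInter I)ᶜ, f x ≤ g x := by
  constructor
  · -- forward: constants dominate
    intro hps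
    refine ⟨Set.range (fun n : ℕ => ContinuousMap.const X (n : ℝ)),
      Set.countable_range _, ?_⟩
    intro f
    obtain ⟨M, hM⟩ := hps f
    refine ⟨ContinuousMap.const X ((⌈M⌉₊ : ℝ)), ⟨⌈M⌉₊, rfl⟩, ?_⟩
    intro x hx
    calc f x ≤ |f x| := le_abs_self _
      _ ≤ M := hM x hx
      _ ≤ (⌈M⌉₊ : ℝ) := Nat.le_ceil M
  · -- backward
    rintro ⟨F, hFc, hFdom⟩
    intro f
    by_contra hub
    push_neg at hub
    -- pick points where |f| is large
    have hx : ∀ n : ℕ, ∃ x ∈ (zInter I)ᶜ, (n : ℝ) + 1 ≤ |f x| := by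
      intro n
      obtain ⟨x, hxA, hxf⟩ := hub ((n : ℝ) + 1)
      exact ⟨x, hxA, le_of_lt hxf⟩
    choose x hxA hxf using hx
    -- F is nonempty, enumerate it
    have hFne : F.Nonempty := by
      obtain ⟨g, hg, -⟩ := hFdom 0
      exact ⟨g, hg⟩
    obtain ⟨G, hG⟩ := Set.Countable.exists_eq_range hFc hFne
    set c : ℕ → ℝ := fun n => G n (x n) + 1 with hc
    set d : ℕ → ℝ := fun n => ∑ k ∈ Finset.range (n + 1), max (c k) 0 with hdd
    have hdmono : ∀ k, d k ≤ d (k + 1) := by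
      intro k
      simp only [hdd]
      rw [Finset.sum_range_succ (n := k + 1)]
      have : (0 : ℝ) ≤ max (c (k + 1)) 0 := le_max_right _ _
      linarith
    have hdge : ∀ n, c n ≤ d n := by
      intro n
      have h1 : c n ≤ max (c n) 0 := le_max_left _ _
      have h2 : max (c n) 0 ≤ ∑ k ∈ Finset.range (n + 1), max (c k) 0 :=
        Finset.single_le_sum (f := fun k => max (c k) 0)
          (fun k _ => le_max_right _ _) (Finset.self_mem_range_succ n)
      exact le_trans h1 h2
    obtain ⟨φ, hφc, hφge⟩ := exists_phi d hdmono
    set h : C(X, ℝ) := ⟨fun y => φ |f y|, hφc.comp f.continuous.abs⟩ with hh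
    obtain ⟨g, hgF, hgdom⟩ := hFdom h
    rw [hG] at hgF
    obtain ⟨n, rfl⟩ := hgF
    have h1 : d n ≤ h (x n) := hφge n |f (x n)| (hxf n)
    have h2 : h (x n) ≤ G n (x n) := hgdom (x n) (hxA n)
    have h3 : c n ≤ G n (x n) := le_trans (hdge n) (le_trans h1 h2)
    simp only [hc] at h3
    linarith
end

section
/- Let I be an ideal of C(X) such that X is I-pseudocompact. Then every f ∈ I has pseudocompact support: the closure in X of the cozero set {x ∈ X : f(x) ≠ 0}, regarded as a subspace of X, is pseudocompact (every continuous real-valued function on this subspace is bounded). -/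
open Set Topology TopologicalSpace Pointwise

/-- if `X` is `I`-pseudocompact then every `f ∈ I` has pseudocompact
support: the closure in `X` of `{x : f x ≠ 0}` is a pseudocompact subspace. -/
theorem stmt_9 {X : Type*} [TopologicalSpace X] [T35Space X] (I : Ideal C(X, ℝ))
    (h : IPseudocompact I) (f : C(X, ℝ)) (hf : f ∈ I) :
    PseudocompactOn (closure {x : X | f x ≠ 0}) := by
  set S : Set X := closure {x : X | f x ≠ 0} with hSdef
  intro g
  by_contra hg
  push_neg at hg
  have hScl : IsClosed S := isClosed_closure
  have hsub : {x : X | f x ≠ 0} ⊆ S := subset_closure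
  -- the cozero set as a subtype
  have hTS : ∀ t : {x : X // f x ≠ 0}, (t : X) ∈ S := fun t => hsub t.2
  set G : {x : X // f x ≠ 0} → ℝ := fun t => |g ⟨t.1, hTS t⟩| with hGdef
  -- Step A : g is unbounded already on the cozero set
  have stepA : ∀ M : ℝ, ∃ t : {x : X // f x ≠ 0}, M < G t := by
    intro M
    by_contra hA
    push_neg at hA
    obtain ⟨y, hy⟩ := hg M
    refine absurd hy (not_lt.2 ?_)
    have hC : IsClosed {w : S | |g w| ≤ M} := by
      have hcont : Continuous fun w : S => |g w| := (map_continuous g).abs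
      exact isClosed_le hcont continuous_const
    have hyc : y ∈ closure {w : S | (w : X) ∈ {x : X | f x ≠ 0}} := by
      rw [closure_subtype]
      have himg : {x : X | f x ≠ 0} ∩ S ⊆
          (Subtype.val '' {w : S | (w : X) ∈ {x : X | f x ≠ 0}}) := by
        rintro x ⟨hx1, hx2⟩
        exact ⟨⟨x, hx2⟩, hx1, rfl⟩
      have : (y : X) ∈ closure ({x : X | f x ≠ 0} ∩ S) := by
        rw [inter_eq_left.2 hsub]
        exact y.2
      exact closure_mono himg this
    have hsubC : {w : S | (w : X) ∈ {x : X | f x ≠ 0}} ⊆ {w : S | |g w| ≤ M} := by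
      intro w hw
      have := hA ⟨w.1, hw⟩
      simpa [hGdef] using this
    exact (hC.closure_subset_iff.2 hsubC) hyc
  choose q hq using stepA
  -- the sequence of points
  set p : ℕ → {x : X // f x ≠ 0} := fun n => Nat.rec (q 0) (fun _ t => q (G t + 3)) n with hpdef
  have hp0 : 0 < G (p 0) := hq 0
  have hpstep : ∀ n, G (p n) + 3 < G (p (n + 1)) := fun n => hq _
  set a : ℕ → ℝ := fun n => G (p n) with hadef
  have ha3 : ∀ n : ℕ, 3 * (n : ℝ) ≤ a n := by
    intro n
    induction n with
    | zero => simpa using hp0.le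
    | succ k ih =>
        have := hpstep k
        push_cast
        nlinarith
  have hamono : ∀ m n : ℕ, m < n → a m + 3 < a n := by
    intro m n hmn
    induction n with
    | zero => omega
    | succ k ih =>
        rcases Nat.lt_succ_iff_lt_or_eq.1 hmn with hlt | heq
        · have := hpstep k
          have := ih hlt
          linarith
        · subst heq; exact hpstep m
  have hasep : ∀ m n : ℕ, m ≠ n → 3 ≤ |a m - a n| := by
    intro m n hmn
    rcases lt_or_gt_of_ne hmn with hlt | hlt
    · have := hamono m n hlt
      rw [abs_sub_comm, abs_of_nonneg (by linarith)]
      linarith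
    · have := hamono n m hlt
      rw [abs_of_nonneg (by linarith)]
      linarith
  -- Step B : continuity of |g| in the subspace, expressed with open sets of X
  have stepB : ∀ x : S, ∃ U : Set X, IsOpen U ∧ (x : X) ∈ U ∧
      ∀ y : X, ∀ hy : y ∈ S, y ∈ U → abs (|g ⟨y, hy⟩| - |g x|) < 1 := by
    intro x
    have hc : ContinuousAt (fun w : S => |g w|) x := ((map_continuous g).abs).continuousAt
    have hball : {w : S | abs (|g w| - |g x|) < 1} ∈ 𝓝 x := by
      have := hc (Metric.ball_mem_nhds (|g x|) one_pos)
      simpa [Set.preimage, Metric.mem_ball, Real.dist_eq] using this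
    rw [mem_nhds_subtype] at hball
    obtain ⟨u, hu, husub⟩ := hball
    obtain ⟨U, hUu, hUopen, hxU⟩ := mem_nhds_iff.1 hu
    refine ⟨U, hUopen, hxU, fun y hy hyU => ?_⟩
    exact husub (hUu hyU)
  choose O hOopen hOmem hOsmall using fun n => stepB ⟨(p n : X), hTS (p n)⟩
  -- the open sets W n
  set W : ℕ → Set X := fun n => {x : X | f x ≠ 0} ∩ O n with hWdef
  have hWopen : ∀ n, IsOpen (W n) := fun n =>
    (isOpen_ne_fun (map_continuous f) continuous_const).inter (hOopen n)
  have hpW : ∀ n, (p n : X) ∈ W n := fun n => ⟨(p n).2, hOmem n⟩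
  have hWS : ∀ n, W n ⊆ S := fun n => (inter_subset_left).trans hsub
  have hWval : ∀ n, ∀ y : X, ∀ hy : y ∈ S, y ∈ W n → abs (|g ⟨y, hy⟩| - a n) < 1 := by
    intro n y hy hyW
    exact hOsmall n y hy hyW.2
  -- points of the sequence are pairwise not in other W's
  have hpnotW : ∀ m n : ℕ, m ≠ n → (p n : X) ∉ W m := by
    intro m n hmn hmem
    have h1 := hWval m (p n) (hTS (p n)) hmem
    have h2 := hasep m n hmn
    have : |g ⟨(p n : X), hTS (p n)⟩| = a n := rfl
    rw [this] at h1
    rw [abs_sub_comm] at h1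
    linarith
  -- local finiteness of W
  have hlfW : LocallyFinite W := by
    intro x
    by_cases hxS : x ∈ S
    · obtain ⟨U, hUopen, hxU, hUsmall⟩ := stepB ⟨x, hxS⟩
      refine ⟨U, hUopen.mem_nhds hxU, ?_⟩
      set c : ℝ := |g ⟨x, hxS⟩| with hcdef
      obtain ⟨N, hN⟩ := exists_nat_gt ((c + 2) / 3)
      apply (Set.finite_Iio N).subset
      rintro n ⟨y, hyW, hyU⟩
      have hyS : y ∈ S := hWS n hyW
      have h1 := hWval n y hyS hyW
      have h2 := hUsmall y hyS hyU
      have h3 := ha3 n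
      have habs1 := abs_lt.1 h1
      have habs2 := abs_lt.1 h2
      have hnc : (n : ℝ) < N := by
        have : 3 * (n : ℝ) < c + 2 := by linarith
        have : (n : ℝ) < (c + 2) / 3 := by linarith
        linarith
      exact Nat.cast_lt.mp (by exact_mod_cast hnc)
    · refine ⟨Sᶜ, hScl.isOpen_compl.mem_nhds hxS, ?_⟩
      convert Set.finite_empty
      ext n
      simp only [Set.mem_setOf_eq, Set.mem_empty_iff_false, iff_false]
      rintro ⟨y, hyW, hyc⟩
      exact hyc (hWS n hyW)
  -- bump functions
  have hbump : ∀ n : ℕ, ∃ φ : X → ℝ, Continuous φ ∧ φ (p n) = n ∧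
      Function.support φ ⊆ W n := by
    intro n
    obtain ⟨ψ, hψc, hψ0, hψ1⟩ := CompletelyRegularSpace.completely_regular
      (p n : X) (W n)ᶜ (hWopen n).isClosed_compl (by simp [hpW n])
    refine ⟨fun x => (n : ℝ) * (1 - (ψ x : ℝ)), by fun_prop, by simp [hψ0], ?_⟩
    intro x hx
    by_contra hxW
    have : ψ x = 1 := hψ1 hxW
    simp [this] at hx
  choose φ hφc hφval hφsupp using hbump
  have hlf : LocallyFinite fun n => Function.support (φ n) := hlfW.subset hφsupp
  -- the sum
  set H : X → ℝ := fun x => ∑ᶠ n, φ n x with hHdef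
  have hHcont : Continuous H := continuous_finsum hφc hlf
  have hHval : ∀ n : ℕ, H (p n) = n := by
    intro n
    have : ∑ᶠ m, φ m (p n : X) = φ n (p n) := by
      apply finsum_eq_single
      intro m hmn
      by_contra hne
      exact hpnotW m n hmn (hφsupp m hne)
    rw [hHdef]; simp only [this, hφval n]
  obtain ⟨M, hM⟩ := h ⟨H, hHcont⟩
  obtain ⟨n, hn⟩ := exists_nat_gt M
  have hpz : (p n : X) ∈ (zInter I)ᶜ := by
    intro hz
    exact (p n).2 (hz f hf)
  have := hM (p n) hpz
  rw [ContinuousMap.coe_mk, hHval n, abs_of_nonneg (Nat.cast_nonneg n)] at this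
  linarith
end

section
/- For a Tychonoff space X, the following are equivalent: (i) there exists a nonzero ideal I of C(X) such that X is I-pseudocompact; (ii) there exists at least one point x ∈ X possessing a pseudocompact neighborhood (i.e., X is locally pseudocompact at some point). -/
open Set Topology TopologicalSpace Pointwise

section aux


variable {X : Type*} [TopologicalSpace X]

/-- A bump function from complete regularity. -/
lemma bump_exists [T35Space X] {W : Set X} (hW : IsOpen W) {p : X} (hp : p ∈ W)
    (c : ℝ) (hc : 0 ≤ c) :
    ∃ g : X → ℝ, Continuous g ∧ g p = c ∧ (∀ z, 0 ≤ g z) ∧ ∀ z, z ∉ W → g z = 0 := by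
  obtain ⟨f, hfc, hfp, hfK⟩ := CompletelyRegularSpace.completely_regular p Wᶜ
    hW.isClosed_compl (by simpa using hp)
  refine ⟨fun z => c * (1 - (f z : ℝ)), ?_, ?_, ?_, ?_⟩
  · exact continuous_const.mul (continuous_const.sub (continuous_subtype_val.comp hfc))
  · simp only [hfp]; norm_num
  · intro z
    have h1 : (f z : ℝ) ≤ 1 := (f z).2.2
    simp only []
    nlinarith
  · intro z hz
    have h1 : f z = 1 := hfK (by simpa using hz)
    simp only [h1]
    norm_num


/-- The closure of a bounded open set is pseudocompact. -/
lemma pseudocompact_closure_of_bounded [T35Space X] {O : Set X}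
    (hO : IsOpen O) (hb : BoundedOn O) : PseudocompactOn (closure O) := by
  by_contra hpc
  unfold PseudocompactOn at hpc
  push_neg at hpc
  obtain ⟨h, hh⟩ := hpc
  -- for each n, an open set U n meeting O on which |h| > n
  have key : ∀ n : ℕ, ∃ U : Set X, IsOpen U ∧ (U ∩ O).Nonempty ∧
      ∀ w, ∀ hw : w ∈ closure O, w ∈ U → (n : ℝ) < |h ⟨w, hw⟩| := by
    intro n
    obtain ⟨z, hz⟩ := hh n
    have hA : IsOpen {y : closure O | (n : ℝ) < |h y|} :=
      isOpen_lt continuous_const (continuous_abs.comp h.continuous)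
    rw [isOpen_induced_iff] at hA
    obtain ⟨U, hUopen, hUeq⟩ := hA
    have hzU : (z : X) ∈ U := by
      have : z ∈ Subtype.val ⁻¹' U := by rw [hUeq]; exact hz
      exact this
    refine ⟨U, hUopen, mem_closure_iff.mp z.2 U hUopen hzU, ?_⟩
    intro w hw hwU
    have : (⟨w, hw⟩ : closure O) ∈ Subtype.val ⁻¹' U := hwU
    rw [hUeq] at this
    exact this
  choose U hUopen hUne hUprop using key
  set W : ℕ → Set X := fun n => U n ∩ O with hWdef
  have hWopen : ∀ n, IsOpen (W n) := fun n => (hUopen n).inter hO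
  choose p hp using hUne
  have hLF : LocallyFinite W := by
    intro x0
    by_cases hx0 : x0 ∈ closure O
    · set m := |h ⟨x0, hx0⟩| with hm
      have hB : IsOpen {y : closure O | |h y| < m + 1} :=
        isOpen_lt (continuous_abs.comp h.continuous) continuous_const
      rw [isOpen_induced_iff] at hB
      obtain ⟨T, hTopen, hTeq⟩ := hB
      have hx0T : x0 ∈ T := by
        have : (⟨x0, hx0⟩ : closure O) ∈ Subtype.val ⁻¹' T := by
          rw [hTeq]; simp only [mem_setOf_eq]; linarith
        exact this
      refine ⟨T, hTopen.mem_nhds hx0T, ?_⟩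
      have hsub : {n | (W n ∩ T).Nonempty} ⊆ {n : ℕ | n ≤ ⌈m + 1⌉₊} := by
        rintro n ⟨w, ⟨hwU, hwO⟩, hwT⟩
        have hwcl : w ∈ closure O := subset_closure hwO
        have h1 : (n : ℝ) < |h ⟨w, hwcl⟩| := hUprop n w hwcl hwU
        have h2 : |h ⟨w, hwcl⟩| < m + 1 := by
          have : (⟨w, hwcl⟩ : closure O) ∈ Subtype.val ⁻¹' T := hwT
          rw [hTeq] at this
          exact this
        have : (n : ℝ) ≤ m + 1 := le_of_lt (h1.trans h2)
        have h3 : (n : ℝ) ≤ (⌈m + 1⌉₊ : ℝ) := this.trans (Nat.le_ceil (m + 1))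
        exact_mod_cast h3
      exact (Set.finite_Iic ⌈m + 1⌉₊).subset hsub
    · refine ⟨(closure O)ᶜ, isClosed_closure.isOpen_compl.mem_nhds hx0, ?_⟩
      have : {n | (W n ∩ (closure O)ᶜ).Nonempty} = ∅ := by
        ext n
        simp only [mem_setOf_eq, mem_empty_iff_false, iff_false]
        rintro ⟨w, ⟨_, hwO⟩, hwc⟩
        exact hwc (subset_closure hwO)
      rw [this]
      exact finite_empty
  -- bump functions
  have hbump : ∀ n : ℕ, ∃ g : X → ℝ, Continuous g ∧ g (p n) = (n : ℝ) ∧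
      (∀ z, 0 ≤ g z) ∧ ∀ z, z ∉ W n → g z = 0 :=
    fun n => bump_exists (hWopen n) (hp n) (n : ℝ) (Nat.cast_nonneg n)
  choose g hgc hgp hgnn hgz using hbump
  have hsupp : ∀ n, Function.support (g n) ⊆ W n := by
    intro n z hz
    by_contra hzW
    exact hz (hgz n z hzW)
  have hLFs : LocallyFinite fun n => Function.support (g n) := hLF.subset hsupp
  have hFc : Continuous fun z => ∑ᶠ n, g n z := continuous_finsum hgc hLFs
  obtain ⟨M, hM⟩ := hb ⟨_, hFc⟩
  set n := ⌈M⌉₊ + 1 with hn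
  have hpn : p n ∈ O := (hp n).2
  have hfin : (Function.support fun k => g k (p n)).Finite := by
    apply (hLFs.point_finite (p n)).subset
    intro k hk
    exact hk
  have h1 : g n (p n) ≤ ∑ᶠ k, g k (p n) :=
    single_le_finsum n hfin fun j => hgnn j (p n)
  rw [hgp n] at h1
  have h2 : |∑ᶠ k, g k (p n)| ≤ M := hM (p n) hpn
  have h3 : (n : ℝ) ≤ M := h1.trans ((le_abs_self _).trans h2)
  have h4 : M < (n : ℝ) := by
    have : M ≤ (⌈M⌉₊ : ℝ) := Nat.le_ceil M
    have : ((⌈M⌉₊ : ℕ) : ℝ) < ((⌈M⌉₊ + 1 : ℕ) : ℝ) := by exact_mod_cast Nat.lt_succ_self _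
    push_cast at *
    linarith [show (n : ℝ) = (⌈M⌉₊ : ℝ) + 1 by simp [hn]]
  linarith

end aux

/-- there is a nonzero ideal `I` of `C(X)` making `X`
`I`-pseudocompact if and only if some point of `X` has a pseudocompact
neighborhood. -/

theorem stmt_10 {X : Type*} [TopologicalSpace X] [T35Space X] :
    (∃ I : Ideal C(X, ℝ), I ≠ ⊥ ∧ IPseudocompact I) ↔
      ∃ x : X, ∃ N ∈ nhds x, PseudocompactOn N := by
  constructor
  · rintro ⟨I, hI, hIps⟩
    obtain ⟨g, hgI, hg⟩ := (Submodule.ne_bot_iff I).mp hI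
    have hx : ∃ x : X, g x ≠ 0 := by
      by_contra hc
      push_neg at hc
      exact hg (by ext x; exact hc x)
    obtain ⟨x, hgx⟩ := hx
    set c := |g x| with hc
    have hcpos : 0 < c := abs_pos.mpr hgx
    set O : Set X := {y | c / 2 < |g y|} with hOdef
    have hOopen : IsOpen O :=
      isOpen_lt continuous_const (continuous_abs.comp g.continuous)
    have hxO : x ∈ O := by
      simp only [hOdef, mem_setOf_eq, ← hc]
      linarith
    have hOB : BoundedOn O := by
      intro φ
      obtain ⟨M, hM⟩ := hIps φ
      refine ⟨M, fun y hy => hM y ?_⟩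
      intro hyz
      have hgy0 : g y = 0 := hyz g hgI
      have h2 : c / 2 < |g y| := hy
      rw [hgy0, abs_zero] at h2
      linarith
    exact ⟨x, closure O, mem_nhds_iff.mpr ⟨O, subset_closure, hOopen, hxO⟩,
      pseudocompact_closure_of_bounded hOopen hOB⟩
  · rintro ⟨x, N, hN, hpcN⟩
    obtain ⟨U, hUN, hUopen, hxU⟩ := mem_nhds_iff.mp hN
    obtain ⟨f, hfc, hfx, hfnn, hfz⟩ := bump_exists hUopen hxU 1 zero_le_one
    set f' : C(X, ℝ) := ⟨f, hfc⟩ with hf'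
    have hf'ne : f' ≠ 0 := by
      intro h0
      have : f x = 0 := by
        have := congrArg (fun φ => ContinuousMap.toFun φ x) h0
        simpa [hf'] using this
      rw [hfx] at this
      norm_num at this
    refine ⟨Ideal.span {f'}, ?_, ?_⟩
    · simpa [Ideal.span_singleton_eq_bot] using hf'ne
    · intro φ
      obtain ⟨M, hM⟩ := hpcN (φ.restrict N)
      refine ⟨M, fun y hy => ?_⟩
      have hyU : y ∈ U := by
        have hyz : ¬ ∀ g ∈ Ideal.span {f'}, g y = 0 := hy
        push_neg at hyz
        obtain ⟨ψ, hψmem, hψy⟩ := hyz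
        obtain ⟨ρ, hρ⟩ := Ideal.mem_span_singleton'.mp hψmem
        by_contra hyU
        apply hψy
        rw [← hρ]
        have : f y = 0 := hfz y hyU
        simp [hf', this]
      have := hM ⟨y, hUN hyU⟩
      simpa using this
end

section
/- Let X be a Tychonoff space that is locally pseudocompact (every point has a pseudocompact neighborhood) but not pseudocompact. Then for every ideal I of C(X) such that X is I-pseudocompact, there exists an ideal J of C(X) with I strictly contained in J such that X is J-pseudocompact. -/
open Set Topology TopologicalSpace Pointwise

/-- if `X` is locally pseudocompact but not pseudocompact, then for
every ideal `I` with `X` `I`-pseudocompact there is a strictly larger ideal `J`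
with `X` `J`-pseudocompact. -/
theorem stmt_11 {X : Type*} [TopologicalSpace X] [T35Space X]
    (hloc : ∀ x : X, ∃ N ∈ nhds x, PseudocompactOn N)
    (hnp : ¬ ∀ f : C(X, ℝ), ∃ M : ℝ, ∀ x : X, |f x| ≤ M)
    (I : Ideal C(X, ℝ)) (hI : IPseudocompact I) :
    ∃ J : Ideal C(X, ℝ), I < J ∧ IPseudocompact J := by
  by_cases hK : ∀ f : C(X, ℝ), BoundedOn {x | f x ≠ 0} → f ∈ I
  · exfalso
    apply hnp
    have hz : zInter I = ∅ := by
      ext x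
      simp only [mem_empty_iff_false, iff_false]
      intro hx
      obtain ⟨N, hN, hP⟩ := hloc x
      -- find f with f x = 1 and f = 0 outside interior N
      obtain ⟨f, cf, hfx, hfK⟩ := CompletelyRegularSpace.completely_regular x (interior N)ᶜ
        isOpen_interior.isClosed_compl (by simp [mem_interior_iff_mem_nhds.mpr hN])
      set g : C(X, ℝ) := ⟨fun y => 1 - (f y : ℝ),
        continuous_const.sub (continuous_subtype_val.comp cf)⟩ with hg
      have hgx : g x = 1 := by simp [hg, hfx]
      have hcoz : {y | g y ≠ 0} ⊆ N := by
        intro y hy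
        by_contra hyN
        have hyK : y ∈ (interior N)ᶜ := fun h => hyN (interior_subset h)
        have := hfK hyK
        apply hy
        simp [hg, this]
      have hb : BoundedOn {y | g y ≠ 0} := by
        intro h
        obtain ⟨M, hM⟩ := hP (h.restrict N)
        exact ⟨M, fun y hy => hM ⟨y, hcoz hy⟩⟩
      have := hx g (hK g hb)
      rw [hgx] at this
      norm_num at this
    intro g
    obtain ⟨M, hM⟩ := hI g
    exact ⟨M, fun x => hM x (by simp [hz])⟩
  · push_neg at hK
    obtain ⟨f, hfb, hfI⟩ := hK
    refine ⟨I ⊔ Ideal.span {f}, ?_, ?_⟩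
    · refine lt_of_le_of_ne le_sup_left (fun h => hfI ?_)
      rw [h]
      exact Ideal.mem_sup_right (Ideal.subset_span rfl)
    · intro g
      obtain ⟨M1, h1⟩ := hI g
      obtain ⟨M2, h2⟩ := hfb g
      refine ⟨max M1 M2, fun x hx => ?_⟩
      by_cases hxf : f x = 0
      · have hxI : x ∈ (zInter I)ᶜ := by
          intro hxI
          apply hx
          intro h hh
          rw [Submodule.mem_sup] at hh
          obtain ⟨a, ha, b, hb, rfl⟩ := hh
          obtain ⟨c, rfl⟩ := Ideal.mem_span_singleton'.mp hb
          have : (c * f) x = 0 := by simp [hxf]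
          simp [hxI a ha, this]
        exact le_trans (h1 x hxI) (le_max_left _ _)
      · exact le_trans (h2 x hxf) (le_max_right _ _)
end

section
/- Let I be a fixed ideal of C(X), i.e., ⋂Z[I] ≠ ∅. Then C(X) with the u^I-topology is not ℵ₀-bounded: there exists a u^I-neighborhood V of the zero function (namely V = B_u(0,I,1)) such that for no countable subset D ⊆ C(X) does one have C(X) = D + V = {d + v : d ∈ D, v ∈ V}. -/
open Set Topology TopologicalSpace Pointwise

/-- if `I` is a fixed ideal (`⋂ Z[I] ≠ ∅`), then `C(X)` with the
`u^I`-topology is not `ℵ₀`-bounded: the neighborhood `V = B_u(0, I, 1)` of `0`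
satisfies `C(X) ≠ D + V` for every countable `D ⊆ C(X)`. -/
theorem stmt_12 {X : Type*} [TopologicalSpace X] [T35Space X] (I : Ideal C(X, ℝ))
    (hfix : (zInter I).Nonempty) :
    uBall I 0 1 ∈ @nhds C(X, ℝ) (uTopology I) 0 ∧
    ¬ ∃ D : Set C(X, ℝ), D.Countable ∧ ∀ f : C(X, ℝ), f ∈ D + uBall I 0 1 := by
  constructor
  · letI := uTopology I
    exact IsOpen.mem_nhds (TopologicalSpace.isOpen_generateFrom_of_mem ⟨0, 1, one_pos, rfl⟩)
      ⟨⟨0, one_pos, fun x => by simp⟩, by simp⟩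
  · rintro ⟨D, hD, hall⟩
    obtain ⟨x₀, hx₀⟩ := hfix
    have key : (Set.univ : Set ℝ) ⊆ (fun d : C(X, ℝ) => d x₀) '' D := by
      intro r _
      obtain ⟨d, hd, v, hv, hdv⟩ := Set.mem_add.mp (hall (ContinuousMap.const X r))
      have hvI : v ∈ I := by
        have := hv.2
        simpa using I.neg_mem_iff.mp (by simpa using this)
      have hvx : v x₀ = 0 := hx₀ v hvI
      refine ⟨d, hd, ?_⟩
      have := congrArg (fun f : C(X, ℝ) => f x₀) hdv
      simpa [hvx] using this
    exact Cardinal.not_countable_real (Set.Countable.mono key (hD.image _))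
end

section
/- Let I be an ideal of C(X). The following are equivalent: (i) C(X) with the m^I-topology is second countable; (ii) C(X) with the m^I-topology is separable; (iii) C(X) with the m^I-topology is Lindelöf; (iv) X is compact and metrizable and I = C(X). -/
open Set Topology TopologicalSpace Pointwise

section Aux

variable {X : Type*} [TopologicalSpace X]

lemma isOpen_mBall (I : Ideal C(X, ℝ)) (f u : C(X, ℝ)) (hu : ∀ x, 0 < u x) :
    IsOpen[mTopology I] (mBall I f u) :=
  TopologicalSpace.GenerateOpen.basic _ ⟨f, u, hu, rfl⟩

lemma self_mem_mBall (I : Ideal C(X, ℝ)) (f u : C(X, ℝ)) (hu : ∀ x, 0 < u x) :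
    f ∈ mBall I f u :=
  ⟨fun x => by simpa using hu x, by simp⟩

lemma isOpen_coset (I : Ideal C(X, ℝ)) (f : C(X, ℝ)) :
    IsOpen[mTopology I] {g | f - g ∈ I} := by
  letI := mTopology I
  have h1 : ∀ x : X, (0:ℝ) < (1 : C(X, ℝ)) x := fun x => by simp
  have : {g | f - g ∈ I} = ⋃ g ∈ {g : C(X, ℝ) | f - g ∈ I}, mBall I g 1 := by
    ext h
    simp only [mem_iUnion, mem_setOf_eq, exists_prop]
    constructor
    · intro hh
      exact ⟨h, hh, self_mem_mBall I h 1 h1⟩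
    · rintro ⟨g, hg, -, hgh⟩
      have : f - h = (f - g) + (g - h) := by ring
      rw [this]
      exact I.add_mem hg hgh
  rw [this]
  exact isOpen_biUnion fun g _ => isOpen_mBall I g 1 h1

lemma exists_countable_reps_of_separable (I : Ideal C(X, ℝ))
    (h : @SeparableSpace C(X, ℝ) (mTopology I)) :
    ∃ S : Set C(X, ℝ), S.Countable ∧ ∀ g : C(X, ℝ), ∃ f ∈ S, f - g ∈ I := by
  letI := mTopology I
  obtain ⟨D, hDc, hDd⟩ := h.exists_countable_dense
  refine ⟨D, hDc, fun g => ?_⟩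
  obtain ⟨d, hdD, hd⟩ := hDd.exists_mem_open (isOpen_coset I g) ⟨g, by simp⟩
  exact ⟨d, hdD, by simpa using I.neg_mem hd⟩

lemma exists_countable_reps_of_lindelof (I : Ideal C(X, ℝ))
    (h : @LindelofSpace C(X, ℝ) (mTopology I)) :
    ∃ S : Set C(X, ℝ), S.Countable ∧ ∀ g : C(X, ℝ), ∃ f ∈ S, f - g ∈ I := by
  letI := mTopology I
  obtain ⟨T, hTc, hTcov⟩ := (@isLindelof_univ _ _ h).elim_countable_subcover
    (fun f : C(X, ℝ) => {g | f - g ∈ I}) (fun f => isOpen_coset I f)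
    (fun g _ => mem_iUnion.mpr ⟨g, by simp⟩)
  refine ⟨T, hTc, fun g => ?_⟩
  simpa using mem_iUnion₂.mp (hTcov (mem_univ g))

lemma pigeon {α : Type*} {S : Set α} (hS : S.Countable) (φ : ℝ → α) (hφ : ∀ r, φ r ∈ S) :
    ∃ r s : ℝ, r ≠ s ∧ φ r = φ s := by
  by_contra hc
  push_neg at hc
  have hinj : Function.Injective (fun r => (⟨φ r, hφ r⟩ : S)) := by
    intro r s h
    by_contra hne
    exact hc r s hne (congrArg Subtype.val h)
  have := hS.to_subtype
  exact (not_countable (α := ℝ)) hinj.countable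

lemma ideal_eq_top_of_reps (I : Ideal C(X, ℝ))
    (h : ∃ S : Set C(X, ℝ), S.Countable ∧ ∀ g : C(X, ℝ), ∃ f ∈ S, f - g ∈ I) : I = ⊤ := by
  obtain ⟨S, hSc, hS⟩ := h
  choose φ hφS hφ using fun r : ℝ => hS (ContinuousMap.const X r)
  obtain ⟨r, s, hrs, he⟩ := pigeon hSc φ hφS
  have h2 : φ r - ContinuousMap.const X s ∈ I := he ▸ hφ s
  have h3 : ContinuousMap.const X (r - s) ∈ I := by
    have := I.sub_mem h2 (hφ r)
    convert this using 1
    ext x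
    simp
  refine I.eq_top_of_isUnit_mem h3 (isUnit_iff_exists_inv.mpr
    ⟨ContinuousMap.const X (r - s)⁻¹, ?_⟩)
  ext x
  simp [mul_inv_cancel₀ (sub_ne_zero.mpr hrs)]

end Aux
section Aux2

variable {X : Type*} [TopologicalSpace X]

/-- The countable `ε`-net property. -/
def HasNet (X : Type*) [TopologicalSpace X] : Prop :=
  ∃ S : Set C(X, ℝ), S.Countable ∧
    ∀ ε : ℝ, 0 < ε → ∀ g : C(X, ℝ), ∃ f ∈ S, ∀ x, |g x - f x| < ε

lemma hasNet_of_separable (h : @SeparableSpace C(X, ℝ) (mTopology (⊤ : Ideal C(X, ℝ)))) :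
    HasNet X := by
  letI := mTopology (⊤ : Ideal C(X, ℝ))
  obtain ⟨D, hDc, hDd⟩ := h.exists_countable_dense
  refine ⟨D, hDc, fun ε hε g => ?_⟩
  have hu : ∀ x : X, (0:ℝ) < (ContinuousMap.const X ε) x := fun x => hε
  obtain ⟨d, hdD, hd⟩ := hDd.exists_mem_open (isOpen_mBall ⊤ g (ContinuousMap.const X ε) hu)
    ⟨g, self_mem_mBall _ _ _ hu⟩
  exact ⟨d, hdD, fun x => hd.1 x⟩

lemma hasNet_of_lindelof (h : @LindelofSpace C(X, ℝ) (mTopology (⊤ : Ideal C(X, ℝ)))) :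
    HasNet X := by
  letI := mTopology (⊤ : Ideal C(X, ℝ))
  have key : ∀ n : ℕ, ∃ T : Set C(X, ℝ), T.Countable ∧
      ∀ g : C(X, ℝ), ∃ f ∈ T, ∀ x, |g x - f x| < 1 / (n + 1) := by
    intro n
    have hu : ∀ x : X, (0:ℝ) < (ContinuousMap.const X (1 / ((n : ℝ) + 1))) x :=
      fun x => by show (0:ℝ) < 1 / ((n : ℝ) + 1); positivity
    obtain ⟨T, hTc, hTcov⟩ := (@isLindelof_univ _ _ h).elim_countable_subcover
      (fun f : C(X, ℝ) => mBall ⊤ f (ContinuousMap.const X (1 / ((n : ℝ) + 1))))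
      (fun f => isOpen_mBall _ _ _ hu)
      (fun g _ => mem_iUnion.mpr ⟨g, self_mem_mBall _ _ _ hu⟩)
    refine ⟨T, hTc, fun g => ?_⟩
    obtain ⟨f, hfT, hf⟩ := mem_iUnion₂.mp (hTcov (mem_univ g))
    exact ⟨f, hfT, fun x => by rw [abs_sub_comm]; exact hf.1 x⟩
  choose T hTc hT using key
  refine ⟨⋃ n, T n, countable_iUnion hTc, fun ε hε g => ?_⟩
  obtain ⟨n, hn⟩ := exists_nat_one_div_lt hε
  obtain ⟨f, hfT, hf⟩ := hT n g
  exact ⟨f, mem_iUnion.mpr ⟨n, hfT⟩, fun x => (hf x).trans hn⟩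

lemma bounded_of_hasNet (h : HasNet X) :
    ∀ f : C(X, ℝ), ∃ M : ℝ, ∀ x, |f x| ≤ M := by
  obtain ⟨S, hSc, hS⟩ := h
  intro f
  choose φ hφS hφ using fun r : ℝ => hS 1 one_pos (r • f)
  obtain ⟨r, s, hrs, he⟩ := pigeon hSc φ hφS
  refine ⟨2 / |r - s|, fun x => ?_⟩
  have h1 := hφ r x
  have h2 := hφ s x
  rw [he] at h1
  have key : |r - s| * |f x| < 2 := by
    have := (abs_sub (r * f x - φ s x) (s * f x - φ s x))
    calc |r - s| * |f x| = |(r - s) * f x| := by rw [abs_mul]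
    _ = |(r * f x - φ s x) - (s * f x - φ s x)| := by ring_nf
    _ ≤ |r * f x - φ s x| + |s * f x - φ s x| := abs_sub _ _
    _ < 1 + 1 := by
        have e1 : (r • f) x = r * f x := rfl
        have e2 : (s • f) x = s * f x := rfl
        rw [e1] at h1; rw [e2] at h2
        exact add_lt_add h1 h2
    _ = 2 := by norm_num
  have hpos : 0 < |r - s| := abs_pos.mpr (sub_ne_zero.mpr hrs)
  rw [le_div_iff₀ hpos]
  nlinarith [key]

end Aux2
section Aux3

variable {X : Type*} [TopologicalSpace X]

lemma compact_and_metrizable_of_hasNet [T35Space X]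
    (hb : ∀ f : C(X, ℝ), ∃ M : ℝ, ∀ x, |f x| ≤ M) (h : HasNet X) :
    CompactSpace X ∧ MetrizableSpace X := by
  obtain ⟨S, hSc, hS⟩ := h
  have hSne : S.Nonempty := by
    obtain ⟨f, hf, -⟩ := hS 1 one_pos 0
    exact ⟨f, hf⟩
  obtain ⟨F, hF⟩ := hSc.exists_eq_range hSne
  set e : X → (ℕ → ℝ) := fun x n => F n x with he
  have hcont : Continuous e := continuous_pi fun n => (F n).continuous
  have hind : IsInducing e := by
    constructor
    refine le_antisymm (continuous_iff_le_induced.mp hcont) ?_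
    rw [le_iff_nhds]
    intro x
    rw [nhds_induced]
    intro U hU
    obtain ⟨V, hVU, hVo, hxV⟩ := mem_nhds_iff.mp hU
    obtain ⟨f, hfc, hfx, hfK⟩ := CompletelyRegularSpace.completely_regular x Vᶜ
      hVo.isClosed_compl (by simpa using hxV)
    set g : C(X, ℝ) := ⟨fun y => (f y : ℝ), continuous_subtype_val.comp hfc⟩ with hg
    obtain ⟨f', hf'S, hf'⟩ := hS (1/3) (by norm_num) g
    rw [hF] at hf'S
    obtain ⟨n, hn⟩ := hf'S
    rw [Filter.mem_comap]
    refine ⟨(fun p : ℕ → ℝ => p n) ⁻¹' Metric.ball (e x n) (1/3), ?_, ?_⟩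
    · exact (continuous_apply n).continuousAt.preimage_mem_nhds
        (Metric.ball_mem_nhds _ (by norm_num))
    · intro y hy
      simp only [mem_preimage, Metric.mem_ball, Real.dist_eq] at hy
      apply hVU
      by_contra hyV
      have hgy : g y = 1 := by
        have := hfK (by simpa using hyV)
        simp only [hg, ContinuousMap.coe_mk]
        rw [show f y = 1 from this]
        rfl
      have hgx : g x = 0 := by
        simp only [hg, ContinuousMap.coe_mk]
        rw [hfx]
        rfl
      have t1 : |g y - f' y| < 1/3 := hf' y
      have t2 : |f' y - f' x| < 1/3 := by
        rw [← hn]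
        simpa [he] using hy
      have t3 : |f' x - g x| < 1/3 := by rw [abs_sub_comm]; exact hf' x
      have : |g y - g x| < 1 := by
        calc |g y - g x| ≤ |g y - f' y| + |f' y - f' x| + |f' x - g x| := by
              have := abs_sub_le (g y) (f' y) (g x)
              have := abs_sub_le (f' y) (f' x) (g x)
              nlinarith [abs_sub_le (g y) (f' y) (g x), abs_sub_le (f' y) (f' x) (g x)]
        _ < 1/3 + 1/3 + 1/3 := by linarith
        _ = 1 := by norm_num
      rw [hgy, hgx] at this
      norm_num at this
  have hinj : Function.Injective e := hind.injective
  have hemb : IsEmbedding e := ⟨hind, hinj⟩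
  refine ⟨?_, hemb.metrizableSpace⟩
  -- compactness
  choose M hM using fun n => hb (F n)
  have hsub : range e ⊆ Set.univ.pi (fun n => Icc (-(M n)) (M n)) := by
    rintro _ ⟨x, rfl⟩ n -
    exact abs_le.mp (hM n x)
  have hKc : IsCompact (closure (range e)) :=
    IsCompact.of_isClosed_subset (isCompact_univ_pi fun n => isCompact_Icc)
      isClosed_closure (closure_minimal hsub (isClosed_set_pi fun n _ => isClosed_Icc))
  have hclosed : IsClosed (range e) := by
    letI : MetricSpace (ℕ → ℝ) := TopologicalSpace.metrizableSpaceMetric _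
    rw [← isOpen_compl_iff]
    rw [isOpen_iff_mem_nhds]
    intro y hy
    by_contra hnen
    have hy' : y ∈ closure (range e) := by
      by_contra hcl
      exact hnen (mem_nhds_iff.mpr ⟨(closure (range e))ᶜ, fun z hz => fun hzr =>
        hz (subset_closure hzr), isClosed_closure.isOpen_compl, hcl⟩)
    have hpos : ∀ x : X, 0 < dist (e x) y :=
      fun x => dist_pos.mpr (fun hxy => hy (hxy ▸ mem_range_self x))
    have gcont : Continuous (fun x : X => (dist (e x) y)⁻¹) :=
      (hcont.dist continuous_const).inv₀ (fun x => (hpos x).ne')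
    obtain ⟨Mg, hMg⟩ := hb ⟨_, gcont⟩
    set K : ℝ := max Mg 1 with hK
    have hKpos : 0 < K := lt_of_lt_of_le one_pos (le_max_right _ _)
    rw [Metric.mem_closure_iff] at hy'
    obtain ⟨b, ⟨x, rfl⟩, hbx⟩ := hy' K⁻¹ (by positivity)
    have hb1 : (dist (e x) y)⁻¹ ≤ K := by
      have := hMg x
      have h2 : (dist (e x) y)⁻¹ ≤ Mg := by
        have : |(dist (e x) y)⁻¹| ≤ Mg := hMg x
        rwa [abs_of_pos (inv_pos.mpr (hpos x))] at this
      exact h2.trans (le_max_left _ _)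
    have : K⁻¹ ≤ dist (e x) y := by
      rw [inv_le_comm₀ hKpos (hpos x)]
      exact hb1
    rw [dist_comm] at hbx
    linarith
  have : IsCompact (range e) := hKc.of_isClosed_subset hclosed subset_closure
  constructor
  rw [hemb.isCompact_iff]
  rwa [Set.image_univ]

end Aux3
section Aux4

variable {X : Type*} [TopologicalSpace X]

lemma secondCountable_of_subsingleton {α : Type*} [Subsingleton α] [t : TopologicalSpace α] :
    SecondCountableTopology α := by
  have hbot : t = ⊥ := eq_bot_of_singletons_open (fun a => by
    have : ({a} : Set α) = univ := eq_univ_of_forall fun b => by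
      simp [Subsingleton.elim b a]
    rw [this]
    exact isOpen_univ)
  haveI : DiscreteTopology α := ⟨hbot⟩
  infer_instance

lemma mem_nhds_mTopology {I : Ideal C(X, ℝ)} {s : Set C(X, ℝ)} {f : C(X, ℝ)}
    (ho : IsOpen[mTopology I] s) (hf : f ∈ s) : s ∈ @nhds _ (mTopology I) f := by
  letI := mTopology I
  exact ho.mem_nhds hf

lemma mTopology_top_eq' [CompactSpace X] [MetrizableSpace X] [Nonempty X] :
    mTopology (⊤ : Ideal C(X, ℝ)) = (ContinuousMap.compactOpen : TopologicalSpace C(X, ℝ)) := by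
  letI : MetricSpace X := TopologicalSpace.metrizableSpaceMetric X
  apply le_antisymm
  · -- mTopology ≤ compactOpen : every compactOpen-open set is mTopology-open
    rw [le_iff_nhds]
    intro f
    refine (Metric.nhds_basis_ball.ge_iff).mpr ?_
    intro ε hε
    have hu : ∀ x : X, (0:ℝ) < (ContinuousMap.const X (ε/2)) x := fun x => by
      show (0:ℝ) < ε/2; positivity
    have hsub : mBall ⊤ f (ContinuousMap.const X (ε/2)) ⊆ Metric.ball f ε := by
      intro g hg
      rw [Metric.mem_ball, dist_comm]
      have : dist f g ≤ ε/2 := by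
        rw [ContinuousMap.dist_le (by positivity)]
        intro x
        rw [Real.dist_eq]
        exact (hg.1 x).le
      linarith
    exact Filter.mem_of_superset
      (mem_nhds_mTopology (isOpen_mBall ⊤ f _ hu) (self_mem_mBall _ _ _ hu)) hsub
  · -- compactOpen ≤ mTopology : every mBall is compactOpen-open
    apply le_generateFrom
    rintro B ⟨f, u, hu, rfl⟩
    rw [Metric.isOpen_iff]
    intro g hg
    -- minimum of u - |f - g| over compact X
    have hv : Continuous fun x => u x - |f x - g x| :=
      u.continuous.sub ((f.continuous.sub g.continuous).abs)
    obtain ⟨x₀, -, hx₀⟩ := isCompact_univ.exists_isMinOn univ_nonempty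
      hv.continuousOn
    set m : ℝ := u x₀ - |f x₀ - g x₀| with hm
    have hmpos : 0 < m := sub_pos.mpr (hg.1 x₀)
    refine ⟨m, hmpos, fun h hh => ?_⟩
    rw [Metric.mem_ball] at hh
    refine ⟨fun x => ?_, trivial⟩
    have h1 : |g x - h x| ≤ dist h g := by
      have h' := ContinuousMap.dist_apply_le_dist (f := g) (g := h) x
      rw [Real.dist_eq] at h'
      rwa [dist_comm g h] at h'
    have h2 : m ≤ u x - |f x - g x| := hx₀ (mem_univ x)
    calc |f x - h x| ≤ |f x - g x| + |g x - h x| := abs_sub_le _ _ _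
    _ ≤ |f x - g x| + dist h g := by linarith
    _ < |f x - g x| + m := by linarith
    _ ≤ u x := by linarith

lemma secondCountable_of_compact_metrizable [T35Space X]
    (hc : CompactSpace X) (hm : MetrizableSpace X) :
    @SecondCountableTopology C(X, ℝ) (mTopology (⊤ : Ideal C(X, ℝ))) := by
  rcases isEmpty_or_nonempty X with hX | hX
  · haveI : Subsingleton C(X, ℝ) := ⟨fun f g => ContinuousMap.ext fun x => (IsEmpty.false x).elim⟩
    exact @secondCountable_of_subsingleton _ _ (mTopology ⊤)
  · rw [mTopology_top_eq']
    exact ContinuousMap.instSecondCountableTopology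

end Aux4
/-- for `C(X)` with the `m^I`-topology, the following are equivalent:
(i) second countable; (ii) separable; (iii) Lindelöf;
(iv) `X` is compact and metrizable and `I = C(X)`. -/
theorem stmt_13 {X : Type*} [TopologicalSpace X] [T35Space X] (I : Ideal C(X, ℝ)) :
    [@SecondCountableTopology C(X, ℝ) (mTopology I),
     @SeparableSpace C(X, ℝ) (mTopology I),
     @LindelofSpace C(X, ℝ) (mTopology I),
     CompactSpace X ∧ MetrizableSpace X ∧ I = ⊤].TFAE := by
  tfae_have 1 → 2 := fun h => @SecondCountableTopology.to_separableSpace _ (mTopology I) h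
  tfae_have 1 → 3 := fun h => by
    letI := mTopology I
    haveI := h
    exact ⟨HereditarilyLindelof_LindelofSets Set.univ⟩
  tfae_have 2 → 4 := fun h => by
    have hI : I = ⊤ := ideal_eq_top_of_reps I (exists_countable_reps_of_separable I h)
    subst hI
    have hnet := hasNet_of_separable h
    obtain ⟨hc, hm⟩ := compact_and_metrizable_of_hasNet (bounded_of_hasNet hnet) hnet
    exact ⟨hc, hm, rfl⟩
  tfae_have 3 → 4 := fun h => by
    have hI : I = ⊤ := ideal_eq_top_of_reps I (exists_countable_reps_of_lindelof I h)
    subst hI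
    have hnet := hasNet_of_lindelof h
    obtain ⟨hc, hm⟩ := compact_and_metrizable_of_hasNet (bounded_of_hasNet hnet) hnet
    exact ⟨hc, hm, rfl⟩
  tfae_have 4 → 1 := fun ⟨hc, hm, hI⟩ => by
    subst hI
    exact secondCountable_of_compact_metrizable hc hm
  tfae_finish
end

section
/- Let I be an ideal of C(X). The space C(X) equipped with the m^I-topology is σ-compact (a countable union of compact subsets) if and only if X is finite and I = C(X). -/
open Set Topology TopologicalSpace Pointwise

open BoundedContinuousFunction

namespace Stmt14Aux

variable {X : Type*} [TopologicalSpace X]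

lemma mem_mBall {I : Ideal C(X, ℝ)} {f u g : C(X, ℝ)} :
    g ∈ mBall I f u ↔ (∀ x, |f x - g x| < u x) ∧ f - g ∈ I := Iff.rfl

lemma isOpen_mBall (I : Ideal C(X, ℝ)) (f u : C(X, ℝ)) (hu : ∀ x, 0 < u x) :
    IsOpen[mTopology I] (mBall I f u) :=
  isOpen_generateFrom_of_mem ⟨f, u, hu, rfl⟩

lemma mem_mBall_self (I : Ideal C(X, ℝ)) (f u : C(X, ℝ)) (hu : ∀ x, 0 < u x) :
    f ∈ mBall I f u :=
  ⟨fun x => by simpa using hu x, by simpa using I.zero_mem⟩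

lemma isOpen_of_forall_mBall {I : Ideal C(X, ℝ)} {U : Set C(X, ℝ)}
    (h : ∀ g ∈ U, ∃ f u, (∀ x, 0 < u x) ∧ g ∈ mBall I f u ∧ mBall I f u ⊆ U) :
    IsOpen[mTopology I] U := by
  letI := mTopology I
  rw [isOpen_iff_forall_mem_open]
  intro g hg
  obtain ⟨f, u, hu, hgm, hsub⟩ := h g hg
  exact ⟨mBall I f u, hsub, isOpen_mBall I f u hu, hgm⟩

lemma countable_quotient (I : Ideal C(X, ℝ)) (S : AddSubgroup C(X, ℝ))
    (hS : ∀ g h : C(X, ℝ), (∀ x, |g x - h x| < 1) → g - h ∈ I → g - h ∈ S)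
    (hσ : @SigmaCompactSpace C(X, ℝ) (mTopology I)) :
    Countable (C(X, ℝ) ⧸ S) := by
  letI := mTopology I
  set q : C(X, ℝ) → C(X, ℝ) ⧸ S := fun g => QuotientAddGroup.mk g with hq
  have hone : ∀ x : X, (0:ℝ) < (1 : C(X, ℝ)) x := fun x => by simp
  have hopen : ∀ y : C(X, ℝ) ⧸ S, IsOpen (q ⁻¹' {y}) := by
    intro y
    apply isOpen_of_forall_mBall
    intro g hg
    refine ⟨g, 1, hone, mem_mBall_self I g 1 hone, ?_⟩
    intro h hh
    simp only [mem_preimage, mem_singleton_iff] at hg ⊢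
    rw [← hg]
    have h1 : ∀ x, |g x - h x| < 1 := fun x => by simpa using hh.1 x
    have hm : g - h ∈ S := hS g h h1 hh.2
    exact QuotientAddGroup.eq_iff_sub_mem.mpr (by simpa using S.neg_mem hm)
  have himg : ∀ K : Set C(X, ℝ), IsCompact K → (q '' K).Finite := by
    intro K hK
    obtain ⟨t, ht⟩ := hK.elim_finite_subcover (fun y : C(X, ℝ) ⧸ S => q ⁻¹' {y}) hopen
      (fun g _ => mem_iUnion.mpr ⟨q g, rfl⟩)
    refine t.finite_toSet.subset ?_
    rintro y ⟨g, hgK, rfl⟩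
    obtain ⟨z, hz, hgz⟩ := mem_iUnion₂.mp (ht hgK)
    simp only [mem_preimage, mem_singleton_iff] at hgz
    rwa [hgz]
  obtain ⟨K, hKc, hKu⟩ := hσ.isSigmaCompact_univ
  have hsurj : Function.Surjective q := QuotientAddGroup.mk_surjective
  have : (univ : Set (C(X, ℝ) ⧸ S)).Countable := by
    have h2 : (univ : Set (C(X, ℝ) ⧸ S)) = ⋃ n, q '' K n := by
      rw [← image_iUnion, hKu, image_univ, hsurj.range_eq]
    rw [h2]
    exact countable_iUnion fun n => (himg _ (hKc n)).countable
  exact countable_univ_iff.mp this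


lemma ideal_eq_top (I : Ideal C(X, ℝ)) (hσ : @SigmaCompactSpace C(X, ℝ) (mTopology I)) :
    I = ⊤ := by
  by_contra hI
  haveI hcount : Countable (C(X, ℝ) ⧸ I.toAddSubgroup) :=
    countable_quotient I I.toAddSubgroup (fun g h _ hm => hm) hσ
  have hinj : Function.Injective (fun r : ℝ =>
      (QuotientAddGroup.mk (ContinuousMap.const X r) : C(X, ℝ) ⧸ I.toAddSubgroup)) := by
    intro r s hrs
    by_contra hne
    rw [QuotientAddGroup.eq_iff_sub_mem] at hrs
    have hm : (ContinuousMap.const X (r - s)) ∈ I := by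
      have h0 : ContinuousMap.const X r - ContinuousMap.const X s
          = ContinuousMap.const X (r - s) := by ext x; simp
      rw [← h0]
      exact hrs
    apply hI
    rw [Ideal.eq_top_iff_one]
    have h2 := I.mul_mem_left (ContinuousMap.const X (r - s)⁻¹) hm
    have h3 : (ContinuousMap.const X (r - s)⁻¹) * ContinuousMap.const X (r - s)
        = (1 : C(X, ℝ)) := by
      ext x
      simp [inv_mul_cancel₀ (sub_ne_zero.mpr hne)]
    rwa [h3] at h2
  exact (not_countable_iff.mpr inferInstance) hinj.countable

/-- The additive subgroup of bounded continuous functions. -/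
def bddSubgroup (X : Type*) [TopologicalSpace X] : AddSubgroup C(X, ℝ) where
  carrier := {f | ∃ M, ∀ x, |f x| ≤ M}
  zero_mem' := ⟨0, fun x => by simp⟩
  add_mem' := by
    rintro a b ⟨M, hM⟩ ⟨N, hN⟩
    refine ⟨M + N, fun x => ?_⟩
    calc |(a + b) x| = |a x + b x| := by rw [ContinuousMap.add_apply]
    _ ≤ |a x| + |b x| := abs_add_le _ _
    _ ≤ M + N := add_le_add (hM x) (hN x)
  neg_mem' := by
    rintro a ⟨M, hM⟩
    exact ⟨M, fun x => by rw [ContinuousMap.neg_apply, abs_neg]; exact hM x⟩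

lemma all_bounded (hσ : @SigmaCompactSpace C(X, ℝ) (mTopology (⊤ : Ideal C(X, ℝ))))
    (f : C(X, ℝ)) : ∃ M, ∀ x, |f x| ≤ M := by
  by_contra hub
  push_neg at hub
  haveI hcount : Countable (C(X, ℝ) ⧸ bddSubgroup X) :=
    countable_quotient ⊤ (bddSubgroup X)
      (fun g h h1 _ => ⟨1, fun x => by rw [ContinuousMap.sub_apply]; exact (h1 x).le⟩) hσ
  have hinj : Function.Injective (fun r : ℝ =>
      (QuotientAddGroup.mk (r • f) : C(X, ℝ) ⧸ bddSubgroup X)) := by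
    intro r s hrs
    by_contra hne
    rw [QuotientAddGroup.eq_iff_sub_mem] at hrs
    obtain ⟨M, hM⟩ := hrs
    have h2 : (0:ℝ) < |r - s| := abs_pos.mpr (sub_ne_zero.mpr hne)
    obtain ⟨x, hx⟩ := hub (M / |r - s|)
    have h1 : |r - s| * |f x| ≤ M := by
      have h4 := hM x
      have h5 : (r • f - s • f) x = (r - s) * f x := by
        simp [ContinuousMap.sub_apply, sub_mul]
      rwa [h5, abs_mul] at h4
    have h6 : |f x| ≤ M / |r - s| := (le_div_iff₀ h2).mpr (by linarith [h1])
    linarith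
  exact (not_countable_iff.mpr inferInstance) hinj.countable

lemma pos_lb (hbd : ∀ f : C(X, ℝ), ∃ M, ∀ x, |f x| ≤ M) (w : C(X, ℝ))
    (hw : ∀ x, 0 < w x) : ∃ δ > (0:ℝ), ∀ x, δ ≤ w x := by
  obtain ⟨M, hM⟩ := hbd ⟨fun x => (w x)⁻¹, w.continuous.inv₀ fun x => (hw x).ne'⟩
  refine ⟨(max M 1)⁻¹, inv_pos.mpr (lt_of_lt_of_le one_pos (le_max_right _ _)), fun x => ?_⟩
  have h1 : (w x)⁻¹ ≤ max M 1 :=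
    le_trans (le_abs_self _) (le_trans (hM x) (le_max_left _ _))
  calc (max M 1)⁻¹ ≤ ((w x)⁻¹)⁻¹ := by
        apply inv_anti₀ (inv_pos.mpr (hw x)) h1
  _ = w x := inv_inv _

lemma finite_of_sigmaCompact [T35Space X]
    (hσ : @SigmaCompactSpace C(X, ℝ) (mTopology (⊤ : Ideal C(X, ℝ))))
    (hbd : ∀ f : C(X, ℝ), ∃ M, ∀ x, |f x| ≤ M) : Finite X := by
  letI := mTopology (⊤ : Ideal C(X, ℝ))
  -- the equivalence with bounded continuous functions
  let e : C(X, ℝ) ≃ (X →ᵇ ℝ) :=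
    { toFun := fun f => ⟨f, by
        obtain ⟨M, hM⟩ := hbd f
        refine ⟨2 * M, fun x y => ?_⟩
        calc dist (f x) (f y) ≤ |f x| + |f y| := by
              rw [Real.dist_eq]; exact abs_sub _ _
        _ ≤ M + M := add_le_add (hM x) (hM y)
        _ = 2 * M := (two_mul M).symm⟩
      invFun := fun F => F.toContinuousMap
      left_inv := fun f => rfl
      right_inv := fun F => rfl }
  have he_apply : ∀ (f : C(X, ℝ)) (x : X), e f x = f x := fun f x => rfl
  have hesymm_apply : ∀ (F : X →ᵇ ℝ) (x : X), (e.symm F) x = F x := fun F x => rfl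
  have hcont : Continuous e := by
    rw [continuous_def]
    intro U hU
    apply isOpen_of_forall_mBall
    intro g hg
    obtain ⟨ε, hε, hball⟩ := Metric.isOpen_iff.mp hU (e g) hg
    have hupos : ∀ x : X, (0:ℝ) < (ContinuousMap.const X (ε/2)) x := fun x => by
      simpa using half_pos hε
    refine ⟨g, ContinuousMap.const X (ε/2), hupos, mem_mBall_self _ _ _ hupos, ?_⟩
    intro h hh
    apply hball
    rw [Metric.mem_ball]
    have hd : dist (e h) (e g) ≤ ε/2 := by
      rw [BoundedContinuousFunction.dist_le (half_pos hε).le]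
      intro x
      rw [he_apply, he_apply, Real.dist_eq, abs_sub_comm]
      exact (by simpa using hh.1 x : |g x - h x| < ε/2).le
    linarith
  have hcont2 : Continuous (e.symm : (X →ᵇ ℝ) → C(X, ℝ)) := by
    apply continuous_generateFrom_iff.mpr
    rintro B ⟨f, u, hu, rfl⟩
    rw [Metric.isOpen_iff]
    intro F hF
    have hF1 : ∀ x, |f x - F x| < u x := fun x => by
      have := (hF : e.symm F ∈ mBall ⊤ f u).1 x
      rwa [hesymm_apply] at this
    set w : C(X, ℝ) := ⟨fun x => u x - |f x - F x|,
      u.continuous.sub ((f.continuous.sub F.continuous).abs)⟩ with hwdef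
    have hwpos : ∀ x, 0 < w x := fun x => sub_pos.mpr (hF1 x)
    obtain ⟨δ, hδ, hδle⟩ := pos_lb hbd w hwpos
    refine ⟨δ, hδ, fun G hG => ?_⟩
    rw [Metric.mem_ball] at hG
    refine ⟨fun x => ?_, trivial⟩
    rw [hesymm_apply]
    have h2 : |F x - G x| < δ := by
      rw [← Real.dist_eq]
      exact lt_of_le_of_lt (by rw [dist_comm]; exact G.dist_coe_le_dist x) hG
    have h3 : δ ≤ u x - |f x - F x| := hδle x
    calc |f x - G x| = |(f x - F x) + (F x - G x)| := by ring_nf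
    _ ≤ |f x - F x| + |F x - G x| := abs_add_le _ _
    _ < u x := by linarith
  -- transfer σ-compactness
  obtain ⟨K, hKc, hKu⟩ := hσ.isSigmaCompact_univ
  have hclosed : ∀ n, IsClosed (e '' K n) := fun n => ((hKc n).image hcont).isClosed
  have hcover : (⋃ n, e '' K n) = univ := by
    rw [← image_iUnion, hKu, image_univ, e.range_eq_univ]
  haveI : Nonempty (X →ᵇ ℝ) := ⟨0⟩
  obtain ⟨n, F, hF⟩ := nonempty_interior_of_iUnion_of_closed hclosed hcover
  rw [mem_interior_iff_mem_nhds, Metric.mem_nhds_iff] at hF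
  obtain ⟨ε, hε, hball⟩ := hF
  have hcomp : IsCompact (Metric.closedBall F (ε/2)) :=
    IsCompact.of_isClosed_subset ((hKc n).image hcont) Metric.isClosed_closedBall
      ((Metric.closedBall_subset_ball (by linarith)).trans hball)
  haveI : FiniteDimensional ℝ (X →ᵇ ℝ) :=
    FiniteDimensional.of_isCompact_closedBall ℝ (half_pos hε) hcomp
  -- now X must be finite
  by_contra hXinf
  rw [not_finite_iff_infinite] at hXinf
  set d := Module.finrank ℝ (X →ᵇ ℝ) with hd
  let emb : Fin (d + 1) ↪ X := (Fin.valEmbedding).trans (Infinite.natEmbedding X)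
  have hsep : ∀ i : Fin (d + 1), ∃ F : X →ᵇ ℝ,
      F (emb i) = 1 ∧ ∀ j, j ≠ i → F (emb j) = 0 := by
    intro i
    have hclosed' : IsClosed (emb '' {j | j ≠ i}) := (Set.toFinite _).isClosed
    have hnot : emb i ∉ emb '' {j | j ≠ i} := by
      rintro ⟨j, hj, hji⟩
      exact hj (emb.injective hji)
    obtain ⟨f, hfc, hf0, hf1⟩ :=
      CompletelyRegularSpace.completely_regular (emb i) _ hclosed' hnot
    refine ⟨⟨⟨fun y => 1 - (f y : ℝ), by
        exact continuous_const.sub (continuous_subtype_val.comp hfc)⟩,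
        ⟨1, fun x y => ?_⟩⟩, ?_, ?_⟩
    · rw [Real.dist_eq]
      have hx1 := (f x).2.1; have hx2 := (f x).2.2
      have hy1 := (f y).2.1; have hy2 := (f y).2.2
      rw [abs_le]
      constructor <;> simp <;> linarith
    · show 1 - ((f (emb i) : ℝ)) = 1
      rw [hf0]; simp
    · intro j hj
      show 1 - ((f (emb j) : ℝ)) = 0
      have : f (emb j) = 1 := hf1 ⟨j, hj, rfl⟩
      rw [this]; simp
  choose G hG1 hG0 using hsep
  have hli : LinearIndependent ℝ G := by
    rw [Fintype.linearIndependent_iff]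
    intro c hc j
    have h0 := congrArg (fun H : X →ᵇ ℝ => H (emb j)) hc
    simp only [BoundedContinuousFunction.coe_sum, Finset.sum_apply,
      BoundedContinuousFunction.coe_smul, Pi.smul_apply, smul_eq_mul,
      BoundedContinuousFunction.coe_zero, Pi.zero_apply] at h0
    rw [Finset.sum_eq_single_of_mem j (Finset.mem_univ j)
      (fun i _ hij => by rw [hG0 i j (Ne.symm hij), mul_zero])] at h0
    rwa [hG1 j, mul_one] at h0
  have hcard := hli.fintype_card_le_finrank
  simp only [Fintype.card_fin, ← hd] at hcard
  omega

lemma sigmaCompact_of_finite [T1Space X] [Finite X] :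
    @SigmaCompactSpace C(X, ℝ) (mTopology (⊤ : Ideal C(X, ℝ))) := by
  letI := mTopology (⊤ : Ideal C(X, ℝ))
  let m : (X → ℝ) → C(X, ℝ) := fun v => ⟨v, continuous_of_discreteTopology⟩
  have hm : Continuous m := by
    apply continuous_generateFrom_iff.mpr
    rintro B ⟨f, u, hu, rfl⟩
    have hpre : m ⁻¹' mBall ⊤ f u = ⋂ x, {v : X → ℝ | |f x - v x| < u x} := by
      ext v
      simp only [mem_preimage, mem_iInter, mem_setOf_eq]
      exact ⟨fun h x => h.1 x, fun h => ⟨h, trivial⟩⟩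
    rw [hpre]
    exact isOpen_iInter_of_finite fun x =>
      isOpen_lt ((continuous_const.sub (continuous_apply x)).abs) continuous_const
  constructor
  refine ⟨fun n => m '' (univ.pi fun _ : X => Icc (-(n:ℝ)) n),
    fun n => (isCompact_univ_pi fun _ => isCompact_Icc).image hm, ?_⟩
  apply eq_univ_of_forall
  intro g
  have hbd : ∃ n : ℕ, ∀ x, |g x| ≤ n := by
    cases isEmpty_or_nonempty X with
    | inl h => exact ⟨0, fun x => (h.elim x)⟩
    | inr h =>
      obtain ⟨x₀, hx₀⟩ := Finite.exists_max fun x => |g x|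
      exact ⟨⌈|g x₀|⌉₊, fun x => (hx₀ x).trans (Nat.le_ceil _)⟩
  obtain ⟨n, hn⟩ := hbd
  refine mem_iUnion.mpr ⟨n, ⟨⇑g, fun x _ => ?_, ?_⟩⟩
  · exact mem_Icc.mpr (abs_le.mp (hn x))
  · show m ⇑g = g
    ext x
    rfl

end Stmt14Aux

/-- `C(X)` with the `m^I`-topology is `σ`-compact if and only if
`X` is finite and `I = C(X)`. -/
theorem stmt_14 {X : Type*} [TopologicalSpace X] [T35Space X] (I : Ideal C(X, ℝ)) :
    @SigmaCompactSpace C(X, ℝ) (mTopology I) ↔ (Finite X ∧ I = ⊤) := by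
  constructor
  · intro hσ
    have hI : I = ⊤ := Stmt14Aux.ideal_eq_top I hσ
    subst hI
    exact ⟨Stmt14Aux.finite_of_sigmaCompact hσ (Stmt14Aux.all_bounded hσ), rfl⟩
  · rintro ⟨hfin, rfl⟩
    exact Stmt14Aux.sigmaCompact_of_finite
end

section
/- Let I be an ideal of C(X). The following are equivalent: (i) C(X) with the m^I-topology is connected; (ii) C(X) with the m^I-topology is path connected; (iii) C(X) with the u^I-topology is connected; (iv) I = C(X) and X is pseudocompact. -/
open Set Topology TopologicalSpace Pointwise

section Aux

variable {X : Type*} [TopologicalSpace X]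

/-- The set of bounded members of `I`. -/
def bddS (I : Ideal C(X, ℝ)) : Set C(X, ℝ) :=
  {g | g ∈ I ∧ ∃ M : ℝ, ∀ x, |g x| ≤ M}

lemma bddS_iff {I : Ideal C(X, ℝ)} {g h : C(X, ℝ)} (hgh : g - h ∈ bddS I) :
    h ∈ bddS I ↔ g ∈ bddS I := by
  obtain ⟨hI1, M1, hM1⟩ := hgh
  simp only [ContinuousMap.sub_apply] at hM1
  constructor
  · rintro ⟨hI2, M2, hM2⟩
    refine ⟨by simpa using add_mem hI1 hI2, M1 + M2, fun x => ?_⟩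
    have h1 := hM1 x; have h2 := hM2 x
    calc |g x| = |(g x - h x) + h x| := by ring_nf
      _ ≤ |g x - h x| + |h x| := abs_add_le _ _
      _ ≤ M1 + M2 := add_le_add h1 h2
  · rintro ⟨hI2, M2, hM2⟩
    refine ⟨by simpa using sub_mem hI2 hI1, M2 + M1, fun x => ?_⟩
    have h1 := hM1 x; have h2 := hM2 x
    calc |h x| = |g x - (g x - h x)| := by ring_nf
      _ ≤ |g x| + |g x - h x| := abs_sub _ _
      _ ≤ M2 + M1 := add_le_add h2 h1

lemma bddS_nonempty (I : Ideal C(X, ℝ)) : (bddS I).Nonempty :=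
  ⟨0, I.zero_mem, 0, fun x => by simp⟩

lemma bddS_eq_univ {I : Ideal C(X, ℝ)} (h : bddS I = univ) :
    I = ⊤ ∧ ∀ f : C(X, ℝ), ∃ M : ℝ, ∀ x : X, |f x| ≤ M := by
  constructor
  · exact (Ideal.eq_top_iff_one I).2 (h ▸ mem_univ (1 : C(X, ℝ)) : (1:C(X,ℝ)) ∈ bddS I).1
  · exact fun f => (h ▸ mem_univ f : f ∈ bddS I).2

lemma isClopen_bddS_m (I : Ideal C(X, ℝ)) : @IsClopen _ (mTopology I) (bddS I) := by
  letI := mTopology I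
  show IsClosed (bddS I) ∧ IsOpen (bddS I)
  have hbasic : ∀ g : C(X, ℝ), IsOpen (mBall I g 1) := fun g =>
    TopologicalSpace.isOpen_generateFrom_of_mem
      ⟨g, 1, fun x => by simpa using one_pos, rfl⟩
  have hself : ∀ g : C(X, ℝ), g ∈ mBall I g 1 :=
    fun g => ⟨fun x => by simpa using one_pos, by simp⟩
  have hkey : ∀ g h : C(X, ℝ), h ∈ mBall I g 1 → (h ∈ bddS I ↔ g ∈ bddS I) := by
    rintro g h ⟨h1, h2⟩
    exact bddS_iff ⟨h2, 1, fun x => by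
      have := h1 x; simp only [ContinuousMap.sub_apply]
      simpa using this.le⟩
  have hopen : ∀ T : Set C(X, ℝ), (∀ g ∈ T, ∀ h ∈ mBall I g 1, h ∈ T) → IsOpen T := by
    intro T hT
    have : T = ⋃ g ∈ T, mBall I g 1 := by
      ext h
      constructor
      · intro hh; exact mem_biUnion hh (hself h)
      · intro hh
        simp only [mem_iUnion, exists_prop] at hh
        obtain ⟨g, hg, hgh⟩ := hh
        exact hT g hg h hgh
    rw [this]
    exact isOpen_biUnion fun g _ => hbasic g
  constructor
  · rw [← isOpen_compl_iff]
    exact hopen _ fun g hg h hh hhS => hg ((hkey g h hh).1 hhS)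
  · exact hopen _ fun g hg h hh => (hkey g h hh).2 hg

lemma isClopen_bddS_u (I : Ideal C(X, ℝ)) : @IsClopen _ (uTopology I) (bddS I) := by
  letI := uTopology I
  show IsClosed (bddS I) ∧ IsOpen (bddS I)
  have hbasic : ∀ g : C(X, ℝ), IsOpen (uBall I g 1) := fun g =>
    TopologicalSpace.isOpen_generateFrom_of_mem ⟨g, 1, one_pos, rfl⟩
  have hself : ∀ g : C(X, ℝ), g ∈ uBall I g 1 :=
    fun g => ⟨⟨0, one_pos, fun x => by simp⟩, by simp⟩
  have hkey : ∀ g h : C(X, ℝ), h ∈ uBall I g 1 → (h ∈ bddS I ↔ g ∈ bddS I) := by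
    rintro g h ⟨⟨M, _, hM⟩, h2⟩
    exact bddS_iff ⟨h2, M, fun x => by
      have := hM x; simpa only [ContinuousMap.sub_apply] using this⟩
  have hopen : ∀ T : Set C(X, ℝ), (∀ g ∈ T, ∀ h ∈ uBall I g 1, h ∈ T) → IsOpen T := by
    intro T hT
    have : T = ⋃ g ∈ T, uBall I g 1 := by
      ext h
      constructor
      · intro hh; exact mem_biUnion hh (hself h)
      · intro hh
        simp only [mem_iUnion, exists_prop] at hh
        obtain ⟨g, hg, hgh⟩ := hh
        exact hT g hg h hgh
    rw [this]
    exact isOpen_biUnion fun g _ => hbasic g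
  constructor
  · rw [← isOpen_compl_iff]
    exact hopen _ fun g hg h hh hhS => hg ((hkey g h hh).1 hhS)
  · exact hopen _ fun g hg h hh => (hkey g h hh).2 hg

/-- On a pseudocompact space every strictly positive continuous function is bounded
below by a positive constant. -/
lemma pos_lower_bound (hp : ∀ f : C(X, ℝ), ∃ M : ℝ, ∀ x : X, |f x| ≤ M)
    (w : X → ℝ) (hwc : Continuous w) (hw : ∀ x, 0 < w x) :
    ∃ c > (0:ℝ), ∀ x, c ≤ w x := by
  obtain ⟨M, hM⟩ := hp ⟨fun x => (w x)⁻¹, hwc.inv₀ fun x => (hw x).ne'⟩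
  refine ⟨(max M 1)⁻¹, inv_pos.2 (lt_of_lt_of_le one_pos (le_max_right _ _)), fun x => ?_⟩
  have hK : (0:ℝ) < max M 1 := lt_of_lt_of_le one_pos (le_max_right _ _)
  have h1 : (w x)⁻¹ ≤ max M 1 :=
    le_trans (le_trans (le_abs_self _) (hM x)) (le_max_left _ _)
  exact inv_le_of_inv_le₀ (hw x) h1

lemma cont_seg_m (I : Ideal C(X, ℝ)) (hI : I = ⊤)
    (hp : ∀ f : C(X, ℝ), ∃ M : ℝ, ∀ x : X, |f x| ≤ M) (f h : C(X, ℝ)) :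
    @Continuous ℝ C(X, ℝ) _ (mTopology I) (fun t : ℝ => f + t • h) := by
  rw [mTopology, continuous_generateFrom_iff]
  rintro B ⟨f', u, hu, rfl⟩
  rw [Metric.isOpen_iff]
  rintro t₀ ⟨ht₁, -⟩
  simp only [ContinuousMap.add_apply, ContinuousMap.smul_apply, smul_eq_mul] at ht₁
  have hw : ∀ x, 0 < u x - |f' x - (f x + t₀ * h x)| := fun x => sub_pos.2 (ht₁ x)
  obtain ⟨c, hc, hcw⟩ := pos_lower_bound hp _
    (by continuity : Continuous fun x => u x - |f' x - (f x + t₀ * h x)|) hw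
  obtain ⟨Mh, hMh⟩ := hp h
  set MH : ℝ := max Mh 0 with hMH
  have hMH0 : (0:ℝ) ≤ MH := le_max_right _ _
  have hMHb : ∀ x, |h x| ≤ MH := fun x => le_trans (hMh x) (le_max_left _ _)
  refine ⟨c / (MH + 1), div_pos hc (by linarith), fun t ht => ?_⟩
  rw [Metric.mem_ball, Real.dist_eq] at ht
  refine ⟨fun x => ?_, by simp [hI]⟩
  simp only [ContinuousMap.add_apply, ContinuousMap.smul_apply, smul_eq_mul]
  have key : f' x - (f x + t * h x) = (f' x - (f x + t₀ * h x)) + (t₀ - t) * h x := by ring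
  have h1 : |f' x - (f x + t * h x)| ≤ |f' x - (f x + t₀ * h x)| + |t₀ - t| * |h x| := by
    rw [key]
    exact le_trans (abs_add_le _ _) (by rw [abs_mul])
  have h2 : |f' x - (f x + t₀ * h x)| ≤ u x - c := by
    have := hcw x; linarith
  have h3 : |t₀ - t| * |h x| < c := by
    have habs : |t₀ - t| = |t - t₀| := abs_sub_comm _ _
    have h4 : |t₀ - t| * |h x| ≤ (c / (MH + 1)) * MH := by
      apply mul_le_mul (by rw [habs]; exact ht.le) (hMHb x) (abs_nonneg _)
      positivity
    have h5 : (c / (MH + 1)) * MH < c := by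
      rw [div_mul_eq_mul_div, div_lt_iff₀ (by linarith)]
      nlinarith
    linarith
  linarith

lemma cont_seg_u (I : Ideal C(X, ℝ)) (hI : I = ⊤)
    (hp : ∀ f : C(X, ℝ), ∃ M : ℝ, ∀ x : X, |f x| ≤ M) (f h : C(X, ℝ)) :
    @Continuous ℝ C(X, ℝ) _ (uTopology I) (fun t : ℝ => f + t • h) := by
  rw [uTopology, continuous_generateFrom_iff]
  rintro B ⟨f', ε, hε, rfl⟩
  rw [Metric.isOpen_iff]
  rintro t₀ ⟨⟨M₀, hM₀, hbd₀⟩, -⟩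
  simp only [ContinuousMap.add_apply, ContinuousMap.smul_apply, smul_eq_mul] at hbd₀
  obtain ⟨Mh, hMh⟩ := hp h
  set MH : ℝ := max Mh 0 with hMH
  have hMH0 : (0:ℝ) ≤ MH := le_max_right _ _
  have hMHb : ∀ x, |h x| ≤ MH := fun x => le_trans (hMh x) (le_max_left _ _)
  refine ⟨(ε - M₀) / (2 * (MH + 1)), div_pos (by linarith) (by linarith), fun t ht => ?_⟩
  rw [Metric.mem_ball, Real.dist_eq] at ht
  refine ⟨⟨M₀ + (ε - M₀) / 2, by linarith, fun x => ?_⟩, by simp [hI]⟩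
  simp only [ContinuousMap.add_apply, ContinuousMap.smul_apply, smul_eq_mul]
  have key : f' x - (f x + t * h x) = (f' x - (f x + t₀ * h x)) + (t₀ - t) * h x := by ring
  have h1 : |f' x - (f x + t * h x)| ≤ |f' x - (f x + t₀ * h x)| + |t₀ - t| * |h x| := by
    rw [key]
    exact le_trans (abs_add_le _ _) (by rw [abs_mul])
  have h3 : |t₀ - t| * |h x| ≤ (ε - M₀) / 2 := by
    have habs : |t₀ - t| = |t - t₀| := abs_sub_comm _ _
    have h4 : |t₀ - t| * |h x| ≤ ((ε - M₀) / (2 * (MH + 1))) * MH := by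
      apply mul_le_mul (by rw [habs]; exact ht.le) (hMHb x) (abs_nonneg _)
      exact le_of_lt (div_pos (by linarith) (by linarith))
    have h5 : ((ε - M₀) / (2 * (MH + 1))) * MH ≤ (ε - M₀) / 2 := by
      rw [div_mul_eq_mul_div, div_le_div_iff₀ (by linarith) (by linarith)]
      nlinarith
    linarith
  have h2 := hbd₀ x
  linarith

lemma pathConnected_m (I : Ideal C(X, ℝ)) (hI : I = ⊤)
    (hp : ∀ f : C(X, ℝ), ∃ M : ℝ, ∀ x : X, |f x| ≤ M) :
    @PathConnectedSpace C(X, ℝ) (mTopology I) := by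
  letI := mTopology I
  refine ⟨⟨0⟩, fun f g => ⟨⟨⟨fun t => f + (t : ℝ) • (g - f), ?_⟩, ?_, ?_⟩⟩⟩
  · exact (cont_seg_m I hI hp f (g - f)).comp continuous_subtype_val
  · simp
  · simp

lemma pathConnected_u (I : Ideal C(X, ℝ)) (hI : I = ⊤)
    (hp : ∀ f : C(X, ℝ), ∃ M : ℝ, ∀ x : X, |f x| ≤ M) :
    @PathConnectedSpace C(X, ℝ) (uTopology I) := by
  letI := uTopology I
  refine ⟨⟨0⟩, fun f g => ⟨⟨⟨fun t => f + (t : ℝ) • (g - f), ?_⟩, ?_, ?_⟩⟩⟩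
  · exact (cont_seg_u I hI hp f (g - f)).comp continuous_subtype_val
  · simp
  · simp

lemma conn_to_four {τ : TopologicalSpace C(X, ℝ)} (I : Ideal C(X, ℝ))
    (hclopen : @IsClopen _ τ (bddS I)) (hconn : @ConnectedSpace _ τ) :
    I = ⊤ ∧ ∀ f : C(X, ℝ), ∃ M : ℝ, ∀ x : X, |f x| ≤ M := by
  letI := τ
  exact bddS_eq_univ (hclopen.eq_univ (bddS_nonempty I))

end Aux

/-- the following are equivalent: (i) `C(X)` with the `m^I`-topology
is connected; (ii) `C(X)` with the `m^I`-topology is path connected; (iii) `C(X)`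
with the `u^I`-topology is connected; (iv) `I = C(X)` and `X` is pseudocompact. -/
theorem stmt_18 {X : Type*} [TopologicalSpace X] [T35Space X] (I : Ideal C(X, ℝ)) :
    [@ConnectedSpace C(X, ℝ) (mTopology I),
     @PathConnectedSpace C(X, ℝ) (mTopology I),
     @ConnectedSpace C(X, ℝ) (uTopology I),
     I = ⊤ ∧ ∀ f : C(X, ℝ), ∃ M : ℝ, ∀ x : X, |f x| ≤ M].TFAE := by
  tfae_have 2 → 1 := fun h => @PathConnectedSpace.connectedSpace _ (mTopology I) h
  tfae_have 1 → 4 := fun h => conn_to_four I (isClopen_bddS_m I) h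
  tfae_have 3 → 4 := fun h => conn_to_four I (isClopen_bddS_u I) h
  tfae_have 4 → 2 := fun ⟨hI, hp⟩ => pathConnected_m I hI hp
  tfae_have 4 → 3 := fun ⟨hI, hp⟩ =>
    @PathConnectedSpace.connectedSpace _ (uTopology I) (pathConnected_u I hI hp)
  tfae_finish
end
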